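/- Let A ∈ (𝕊max)^{n×n}, let γ ∈ 𝕊max^∨ be an 𝕊max-eigenvalue of A (i.e. det(γ⊙I ⊖ A) ∇ 𝟘), and set B = γ⊙I ⊖ A. If the j-th column (B^adj)_{:,j} belongs to (𝕊max^∨)ⁿ ∖ {𝟘}, then (B^adj)_{:,j} satisfies A ⊙ (B^adj)_{:,j} ∇ γ ⊙ (B^adj)_{:,j}, and every v ∈ (𝕊max^∨)ⁿ ∖ {𝟘} with A ⊙ v ∇ γ ⊙ v satisfies v = λ ⊙ (B^adj)_{:,j} for some λ ∈ 𝕊max^∨ ∖ {𝟘}. -/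

import Mathlib

/-!
Common framework: the symmetrized tropical semiring 𝕊max over a linearly
ordered abelian group Γ, represented concretely: an element is either 𝟘
(represented by `none`) or a pair of a modulus `c : Γ` and a sign
(positive, negative or balanced), matching the classes of the quotient
𝕋max²/ℛ described in the paper.
-/

namespace TropPaper

inductive SSign : Type
  | pos
  | neg
  | bal
  deriving DecidableEq

/-- The symmetrized tropical semiring 𝕊max(Γ): `none` is 𝟘, and
`some (c, s)` is the class of modulus `c` and sign `s`. -/
def Smax (Γ : Type) : Type := Option (Γ × SSign)

/-- Γ is divisible. -/
def DivisibleGrp (Γ : Type) [AddCommGroup Γ] : Prop :=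
  ∀ k : ℕ, 0 < k → ∀ a : Γ, ∃ b : Γ, k • b = a

section Defs

variable {Γ : Type} [AddCommGroup Γ] [LinearOrder Γ] [IsOrderedAddMonoid Γ]

/-- 𝟘 -/
def szero : Smax Γ := none

/-- 𝟙 -/
def sone : Smax Γ := some ((0 : Γ), SSign.pos)

/-- modulus |·| : 𝕊max → 𝕋max = WithBot Γ -/
def smod : Smax Γ → WithBot Γ
  | none => ⊥
  | some (c, _) => (c : WithBot Γ)

def sgnMul : SSign → SSign → SSign
  | SSign.pos, t => t
  | SSign.neg, SSign.pos => SSign.neg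
  | SSign.neg, SSign.neg => SSign.pos
  | SSign.neg, SSign.bal => SSign.bal
  | SSign.bal, _ => SSign.bal

/-- ⊕ on 𝕊max -/
def sadd : Smax Γ → Smax Γ → Smax Γ
  | none, b => b
  | some a, none => some a
  | some (c, s), some (d, t) =>
      if c < d then some (d, t)
      else if d < c then some (c, s)
      else some (c, if s = t then s else SSign.bal)

/-- ⊖ (unary) on 𝕊max -/
def sneg : Smax Γ → Smax Γ
  | none => none
  | some (c, SSign.pos) => some (c, SSign.neg)
  | some (c, SSign.neg) => some (c, SSign.pos)
  | some (c, SSign.bal) => some (c, SSign.bal)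

/-- ⊙ on 𝕊max -/
def smul : Smax Γ → Smax Γ → Smax Γ
  | none, _ => none
  | some _, none => none
  | some (c, s), some (d, t) => some (c + d, sgnMul s t)

/-- a ⊖ b -/
def ssub (a b : Smax Γ) : Smax Γ := sadd a (sneg b)

/-- a° = a ⊖ a -/
def sbal (a : Smax Γ) : Smax Γ := ssub a a

/-- the positive element with the same modulus (|·| seen inside 𝕊max⊕) -/
def sabs : Smax Γ → Smax Γ
  | none => none
  | some (c, _) => some (c, SSign.pos)

/-- multiplicative inverse (of invertible, i.e. signed nonzero, elements) -/
def sinv : Smax Γ → Smax Γ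
  | none => none
  | some (c, s) => some (-c, s)

/-- a^{⊙k} -/
def spow (a : Smax Γ) : ℕ → Smax Γ
  | 0 => sone
  | k + 1 => smul a (spow a k)

/-- membership in 𝕊max° (balanced elements together with 𝟘) -/
def IsBal : Smax Γ → Prop
  | none => True
  | some (_, s) => s = SSign.bal

/-- membership in 𝕊max⊕ (positive elements together with 𝟘) -/
def IsPos : Smax Γ → Prop
  | none => True
  | some (_, s) => s = SSign.pos

/-- membership in 𝕊max^∨ (signed elements) -/
def IsSigned : Smax Γ → Prop
  | none => True
  | some (_, s) => s ≠ SSign.bal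

/-- the balance relation a ∇ b -/
def Balance (a b : Smax Γ) : Prop := IsBal (ssub a b)

/-- a ⪯ b -/
def natLe (a b : Smax Γ) : Prop := sadd a b = b

/-- a ≤ b :⟺ b ⊖ a ∈ 𝕊max⊕ ∪ 𝕊max° -/
def sle (a b : Smax Γ) : Prop := IsPos (ssub b a) ∨ IsBal (ssub b a)

/-- a < b :⟺ b ⊖ a ∈ 𝕊max⊕ ∖ {𝟘} -/
def slt (a b : Smax Γ) : Prop := IsPos (ssub b a) ∧ ssub b a ≠ szero

/-- finite ⊕-sum over a list -/
def sumS {α : Type} (l : List α) (f : α → Smax Γ) : Smax Γ :=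
  (l.map f).foldr sadd szero

/-- finite ⊙-product over a list -/
def prodS {α : Type} (l : List α) (f : α → Smax Γ) : Smax Γ :=
  (l.map f).foldr smul sone

/-- the zero vector -/
def zeroVecS {n : ℕ} : Fin n → Smax Γ := fun _ => szero

def VecSigned {n : ℕ} (x : Fin n → Smax Γ) : Prop := ∀ i, IsSigned (x i)

def MatSigned {n : ℕ} (A : Matrix (Fin n) (Fin n) (Smax Γ)) : Prop :=
  ∀ i j, IsSigned (A i j)

def SymmS {n : ℕ} (A : Matrix (Fin n) (Fin n) (Smax Γ)) : Prop :=
  ∀ i j, A i j = A j i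

/-- A ⊙ v -/
def matVecS {n : ℕ} (A : Matrix (Fin n) (Fin n) (Smax Γ)) (v : Fin n → Smax Γ) :
    Fin n → Smax Γ :=
  fun i => sumS (List.finRange n) fun j => smul (A i j) (v j)

/-- A ⊙ B -/
def matMulS {n : ℕ} (A B : Matrix (Fin n) (Fin n) (Smax Γ)) :
    Matrix (Fin n) (Fin n) (Smax Γ) :=
  Matrix.of fun i j => sumS (List.finRange n) fun l => smul (A i l) (B l j)

/-- the identity matrix I -/
def idMatS {n : ℕ} : Matrix (Fin n) (Fin n) (Smax Γ) :=
  Matrix.of fun i j => if i = j then sone else szero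

/-- xᵀ ⊙ A ⊙ x -/
def quadFormS {n : ℕ} (A : Matrix (Fin n) (Fin n) (Smax Γ)) (x : Fin n → Smax Γ) :
    Smax Γ :=
  sumS (List.finRange n) fun i => sumS (List.finRange n) fun j =>
    smul (x i) (smul (A i j) (x j))

/-- tropical positive definiteness (the quadratic-form condition) -/
def TPD {n : ℕ} (A : Matrix (Fin n) (Fin n) (Smax Γ)) : Prop :=
  ∀ x : Fin n → Smax Γ, VecSigned x → x ≠ zeroVecS → slt szero (quadFormS A x)

/-- tropical positive semidefiniteness -/
def TPSD {n : ℕ} (A : Matrix (Fin n) (Fin n) (Smax Γ)) : Prop :=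
  ∀ x : Fin n → Smax Γ, VecSigned x → x ≠ zeroVecS → sle szero (quadFormS A x)

/-- sgn(π) ∈ {𝟙, ⊖𝟙} -/
def permSignS {n : ℕ} (π : Equiv.Perm (Fin n)) : Smax Γ :=
  if (Equiv.Perm.sign π : ℤ) = 1 then sone else sneg sone

/-- the determinant over 𝕊max -/
noncomputable def detS {n : ℕ} (M : Matrix (Fin n) (Fin n) (Smax Γ)) : Smax Γ :=
  sumS (Finset.univ : Finset (Equiv.Perm (Fin n))).toList fun π =>
    smul (permSignS π) (prodS (List.finRange n) fun i => M i (π i))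

/-- the adjugate matrix over 𝕊max -/
noncomputable def adjS {n : ℕ} (M : Matrix (Fin (n+1)) (Fin (n+1)) (Smax Γ)) :
    Matrix (Fin (n+1)) (Fin (n+1)) (Smax Γ) :=
  Matrix.of fun i j =>
    smul (spow (sneg sone) (i.val + j.val))
      (detS (Matrix.of fun a b : Fin n => M (Fin.succAbove j a) (Fin.succAbove i b)))

/-- γ ⊙ I ⊖ A -/
def charMatS {n : ℕ} (γ : Smax Γ) (A : Matrix (Fin n) (Fin n) (Smax Γ)) :
    Matrix (Fin n) (Fin n) (Smax Γ) :=
  Matrix.of fun i j => ssub (smul γ (idMatS i j)) (A i j)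

/-- tr_k(A) = ⊕_{|K| = k} det(A[K,K]) -/
noncomputable def trkS {n : ℕ} (k : ℕ) (A : Matrix (Fin n) (Fin n) (Smax Γ)) : Smax Γ :=
  sumS ((Finset.univ : Finset (Fin n)).powersetCard k).attach.toList fun K =>
    detS (Matrix.of fun a b : Fin k =>
      A (K.1.orderEmbOfFin (Finset.mem_powersetCard.mp K.2).2 a)
        (K.1.orderEmbOfFin (Finset.mem_powersetCard.mp K.2).2 b))

/-- matrix power A^{⊙k} -/
def matPowS {n : ℕ} (A : Matrix (Fin n) (Fin n) (Smax Γ)) :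
    ℕ → Matrix (Fin n) (Fin n) (Smax Γ)
  | 0 => idMatS
  | k + 1 => matMulS A (matPowS A k)

/-- partial Kleene sums I ⊕ A ⊕ ⋯ ⊕ A^{⊙m} -/
def starPartialS {n : ℕ} (A : Matrix (Fin n) (Fin n) (Smax Γ)) (m : ℕ) :
    Matrix (Fin n) (Fin n) (Smax Γ) :=
  Matrix.of fun i j => sumS (List.range (m+1)) fun k => matPowS A k i j

/-- the diagonal matrix D^(k) with diagonal (γ₁,…,γ_{k−1},𝟘,…,𝟘) (0-based k) -/
def DmatS {n : ℕ} (A : Matrix (Fin n) (Fin n) (Smax Γ)) (k : Fin n) :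
    Matrix (Fin n) (Fin n) (Smax Γ) :=
  Matrix.of fun i j => if i = j ∧ i < k then A i i else szero

/-- the complementary matrix A^(k) -/
def AmatS {n : ℕ} (A : Matrix (Fin n) (Fin n) (Smax Γ)) (k : Fin n) :
    Matrix (Fin n) (Fin n) (Smax Γ) :=
  Matrix.of fun i j => if i ≠ j ∨ k ≤ i then A i j else szero

/-- M = (γ⊙I ⊖ D^(k))^{⊙−1} ⊙ A^(k) -/
def MmatS {n : ℕ} (A : Matrix (Fin n) (Fin n) (Smax Γ)) (k : Fin n) :
    Matrix (Fin n) (Fin n) (Smax Γ) :=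
  Matrix.of fun i j =>
    smul (sinv (if i < k then sneg (A i i) else A k k)) (AmatS A k i j)

/-- λ_k = (⊖𝟙)^{⊙(k−1)} ⊙ γ₁ ⊙ ⋯ ⊙ γ_{k−1} ⊙ γ^{⊙(n−k)} (0-based k, size n) -/
def lamkS {n : ℕ} (A : Matrix (Fin n) (Fin n) (Smax Γ)) (k : Fin n) : Smax Γ :=
  smul (spow (sneg sone) k.val)
    (smul (prodS ((List.finRange n).filter (fun i => i < k)) fun i => A i i)
      (spow (A k k) (n - 1 - k.val)))

/-- irreducibility: the digraph of nonzero entries is strongly connected -/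
def IrreducibleS {n : ℕ} (A : Matrix (Fin n) (Fin n) (Smax Γ)) : Prop :=
  ∀ i j : Fin n, Relation.ReflTransGen (fun a b => A a b ≠ szero) i j

/-- diagonal entries sorted non-increasingly for ⪯ -/
def DiagSortedS {n : ℕ} (A : Matrix (Fin n) (Fin n) (Smax Γ)) : Prop :=
  ∀ i j : Fin n, i ≤ j → natLe (A j j) (A i i)

/-! 𝕋max-side notions (for the characteristic polynomial of |A|). -/

/-- finite max over a list in 𝕋max -/
def sumT {α : Type} (l : List α) (f : α → WithBot Γ) : WithBot Γ :=
  (l.map f).foldr max ⊥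

/-- finite ⊙-product over a list in 𝕋max -/
def prodT {α : Type} (l : List α) (f : α → WithBot Γ) : WithBot Γ :=
  (l.map f).foldr (· + ·) (0 : WithBot Γ)

/-- the permanent over 𝕋max -/
noncomputable def perT {n : ℕ} (M : Matrix (Fin n) (Fin n) (WithBot Γ)) : WithBot Γ :=
  sumT (Finset.univ : Finset (Equiv.Perm (Fin n))).toList fun π =>
    prodT (List.finRange n) fun i => M i (π i)

/-- coefficient of X^k in the 𝕋max-characteristic polynomial of B -/
noncomputable def charCoeffT {n : ℕ} (B : Matrix (Fin n) (Fin n) (WithBot Γ)) (k : ℕ) : WithBot Γ :=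
  if k ≤ n then
    sumT ((Finset.univ : Finset (Fin n)).powersetCard (n - k)).attach.toList fun K =>
      perT (Matrix.of fun a b : Fin (n - k) =>
        B (K.1.orderEmbOfFin (Finset.mem_powersetCard.mp K.2).2 a)
          (K.1.orderEmbOfFin (Finset.mem_powersetCard.mp K.2).2 b))
  else ⊥

/-- multiplicity of x as a 𝕋max-root of the formal polynomial of degree ≤ n
with coefficients Q: for x = ⊥ it is the lower degree, for x = c ∈ Γ it is the
difference between the largest and smallest exponents attaining
max_k (Q_k + k·c). -/
noncomputable def rootMultT (n : ℕ) (Q : ℕ → WithBot Γ) (x : WithBot Γ) : ℕ :=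
  WithBot.recBotCoe
    (sInf {k | Q k ≠ ⊥})
    (fun c =>
      sSup {k | k ≤ n ∧ Q k + ((k • c : Γ) : WithBot Γ)
              = sumT (List.range (n+1)) (fun l => Q l + ((l • c : Γ) : WithBot Γ))}
        - sInf {k | k ≤ n ∧ Q k + ((k • c : Γ) : WithBot Γ)
              = sumT (List.range (n+1)) (fun l => Q l + ((l • c : Γ) : WithBot Γ))})
    x

end Defs

/-- the signed valuation associated with a valuation v on an ordered field L -/
def svMap {Γ : Type} [AddCommGroup Γ] [LinearOrder Γ] [IsOrderedAddMonoid Γ] {L : Type}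
    [Field L] [LinearOrder L] [IsStrictOrderedRing L]
    (v : L → WithBot Γ) (b : L) : Smax Γ :=
  if b = 0 then szero
  else if 0 < b then WithBot.recBotCoe szero (fun c => some (c, SSign.pos)) (v b)
  else WithBot.recBotCoe szero (fun c => some (c, SSign.neg)) (v b)

end TropPaper

attribute [reducible] TropPaper.Smax

namespace TropPaper

section SmaxAlgebra
variable {Γ : Type} [AddCommGroup Γ] [LinearOrder Γ] [IsOrderedAddMonoid Γ]

/-- sign combination used by ⊕ at equal moduli -/
def cmb (s t : SSign) : SSign := if s = t then s else SSign.bal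

lemma cmb_comm (s t : SSign) : cmb s t = cmb t s := by
  cases s <;> cases t <;> rfl

lemma cmb_assoc (s t u : SSign) : cmb (cmb s t) u = cmb s (cmb t u) := by
  cases s <;> cases t <;> cases u <;> rfl

lemma sgnMul_comm (s t : SSign) : sgnMul s t = sgnMul t s := by
  cases s <;> cases t <;> rfl

lemma sgnMul_assoc (s t u : SSign) : sgnMul (sgnMul s t) u = sgnMul s (sgnMul t u) := by
  cases s <;> cases t <;> cases u <;> rfl

lemma sgnMul_cmb (s t u : SSign) : sgnMul s (cmb t u) = cmb (sgnMul s t) (sgnMul s u) := by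
  cases s <;> cases t <;> cases u <;> rfl

@[simp] lemma sadd_none_left (a : Smax Γ) : sadd none a = a := rfl
@[simp] lemma sadd_none_right (a : Smax Γ) : sadd a none = a := by cases a <;> rfl

lemma sadd_some_some (c d : Γ) (s t : SSign) :
    sadd (some (c, s)) (some (d, t)) =
      if c < d then some (d, t) else if d < c then some (c, s) else some (c, cmb s t) := rfl

lemma sadd_lt {c d : Γ} (h : c < d) (s t : SSign) :
    sadd (some (c, s)) (some (d, t)) = some (d, t) := by
  rw [sadd_some_some, if_pos h]

lemma sadd_gt {c d : Γ} (h : d < c) (s t : SSign) :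
    sadd (some (c, s)) (some (d, t)) = some (c, s) := by
  rw [sadd_some_some, if_neg (asymm h), if_pos h]

lemma sadd_eqm (c : Γ) (s t : SSign) :
    sadd (some (c, s)) (some (c, t)) = some (c, cmb s t) := by
  rw [sadd_some_some, if_neg (lt_irrefl c), if_neg (lt_irrefl c)]

lemma sadd_comm' (a b : Smax Γ) : sadd a b = sadd b a := by
  cases a with
  | none => simp
  | some p =>
    cases b with
    | none => simp
    | some q =>
      obtain ⟨c, s⟩ := p; obtain ⟨d, t⟩ := q
      rcases lt_trichotomy c d with h | h | h
      · rw [sadd_lt h, sadd_gt h]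
      · subst h; rw [sadd_eqm, sadd_eqm, cmb_comm]
      · rw [sadd_gt h, sadd_lt h]

lemma sadd_assoc' (a b c : Smax Γ) : sadd (sadd a b) c = sadd a (sadd b c) := by
  cases a with
  | none => simp
  | some p =>
  cases b with
  | none => simp
  | some q =>
  cases c with
  | none => simp
  | some r =>
  obtain ⟨c, s⟩ := p; obtain ⟨d, t⟩ := q; obtain ⟨e, u⟩ := r
  rcases lt_trichotomy c d with h1 | h1 | h1
  · rcases lt_trichotomy d e with h2 | h2 | h2
    · simp only [sadd_lt h1, sadd_lt h2, sadd_lt (h1.trans h2)]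
    · subst h2; simp only [sadd_lt h1, sadd_eqm]
    · simp only [sadd_lt h1, sadd_gt h2]
  · subst h1
    rcases lt_trichotomy c e with h2 | h2 | h2
    · simp only [sadd_eqm, sadd_lt h2]
    · subst h2; simp only [sadd_eqm, cmb_assoc]
    · simp only [sadd_eqm, sadd_gt h2]
  · rcases lt_trichotomy d e with h2 | h2 | h2
    · simp only [sadd_gt h1, sadd_lt h2]
    · subst h2; simp only [sadd_gt h1, sadd_eqm]
    · simp only [sadd_gt h1, sadd_gt h2, sadd_gt (h2.trans h1)]

@[simp] lemma smul_none_left' (a : Smax Γ) : smul none a = none := rfl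
@[simp] lemma smul_none_right' (a : Smax Γ) : smul a none = none := by cases a <;> rfl

lemma smul_some_some (c d : Γ) (s t : SSign) :
    smul (some (c, s)) (some (d, t)) = some (c + d, sgnMul s t) := rfl

lemma smul_comm' (a b : Smax Γ) : smul a b = smul b a := by
  cases a with
  | none => simp
  | some p =>
    cases b with
    | none => simp
    | some q =>
      obtain ⟨c, s⟩ := p; obtain ⟨d, t⟩ := q
      rw [smul_some_some, smul_some_some, add_comm, sgnMul_comm]

lemma smul_assoc' (a b c : Smax Γ) : smul (smul a b) c = smul a (smul b c) := by
  cases a with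
  | none => simp
  | some p =>
  cases b with
  | none => simp
  | some q =>
  cases c with
  | none => simp
  | some r =>
  obtain ⟨c, s⟩ := p; obtain ⟨d, t⟩ := q; obtain ⟨e, u⟩ := r
  simp only [smul_some_some, add_assoc, sgnMul_assoc]

lemma sone_smul (a : Smax Γ) : smul sone a = a := by
  cases a with
  | none => rfl
  | some p =>
    obtain ⟨c, s⟩ := p
    show smul (some ((0:Γ), SSign.pos)) _ = _
    rw [smul_some_some, zero_add]
    cases s <;> rfl

lemma smul_sadd (a b c : Smax Γ) : smul a (sadd b c) = sadd (smul a b) (smul a c) := by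
  cases a with
  | none => simp
  | some p =>
  cases b with
  | none => simp
  | some q =>
  cases c with
  | none => simp
  | some r =>
  obtain ⟨c, s⟩ := p; obtain ⟨d, t⟩ := q; obtain ⟨e, u⟩ := r
  rcases lt_trichotomy d e with h | h | h
  · simp only [sadd_lt h, smul_some_some, sadd_lt ((add_lt_add_iff_left c).2 h)]
  · subst h; simp only [sadd_eqm, smul_some_some, sgnMul_cmb]
  · simp only [sadd_gt h, smul_some_some, sadd_gt ((add_lt_add_iff_left c).2 h)]

instance : Zero (Smax Γ) := ⟨szero⟩
instance : Add (Smax Γ) := ⟨sadd⟩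
instance : One (Smax Γ) := ⟨sone⟩
instance : Mul (Smax Γ) := ⟨smul⟩

instance : CommSemiring (Smax Γ) where
  add_assoc := sadd_assoc'
  zero_add := sadd_none_left
  add_zero := sadd_none_right
  add_comm := sadd_comm'
  nsmul := nsmulRec
  mul_assoc := smul_assoc'
  one_mul := sone_smul
  mul_one := fun a => by show smul a sone = a; rw [smul_comm']; exact sone_smul a
  mul_comm := smul_comm'
  left_distrib := smul_sadd
  right_distrib := fun a b c => by
    show smul (sadd a b) c = sadd (smul a c) (smul b c)
    rw [smul_comm', smul_sadd, smul_comm' c a, smul_comm' c b]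
  zero_mul := fun a => rfl
  mul_zero := smul_none_right'

@[simp] lemma add_def (a b : Smax Γ) : sadd a b = a + b := rfl
@[simp] lemma mul_def (a b : Smax Γ) : smul a b = a * b := rfl
@[simp] lemma zero_def : @Eq (Smax Γ) szero 0 := rfl
@[simp] lemma one_def : @Eq (Smax Γ) sone 1 := rfl
@[simp] lemma none_eq_zero : @Eq (Smax Γ) none 0 := rfl

end SmaxAlgebra

section SmaxBal
variable {Γ : Type} [AddCommGroup Γ] [LinearOrder Γ] [IsOrderedAddMonoid Γ]

lemma plus_eq_sadd (a b : Smax Γ) : a + b = sadd a b := rfl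
lemma times_eq_smul (a b : Smax Γ) : a * b = smul a b := rfl

@[simp] lemma isBal_zero : IsBal (0 : Smax Γ) := trivial
lemma isBal_some {c : Γ} {s : SSign} : IsBal (some (c, s) : Smax Γ) ↔ s = SSign.bal :=
  Iff.rfl
@[simp] lemma isBal_bal (c : Γ) : IsBal (some (c, SSign.bal) : Smax Γ) := rfl

lemma isBal_add {a b : Smax Γ} (ha : IsBal a) (hb : IsBal b) : IsBal (a + b) := by
  rcases a with _ | ⟨c, s⟩
  · rw [none_eq_zero, zero_add]; exact hb
  rcases b with _ | ⟨d, t⟩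
  · rw [none_eq_zero, add_zero]; exact ha
  rw [isBal_some] at ha hb; subst ha; subst hb
  rw [plus_eq_sadd]
  rcases lt_trichotomy c d with h | h | h
  · rw [sadd_lt h]; exact rfl
  · subst h; rw [sadd_eqm]; exact rfl
  · rw [sadd_gt h]; exact rfl

lemma isBal_mul {a : Smax Γ} (b : Smax Γ) (ha : IsBal a) : IsBal (a * b) := by
  rcases a with _ | ⟨c, s⟩
  · rw [none_eq_zero, zero_mul]; exact trivial
  rcases b with _ | ⟨d, t⟩
  · rw [none_eq_zero, mul_zero]; exact trivial
  rw [isBal_some] at ha; subst ha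
  cases t <;> rfl

@[simp] lemma sneg_zero : sneg (0 : Smax Γ) = 0 := rfl
@[simp] lemma sneg_sneg (a : Smax Γ) : sneg (sneg a) = a := by
  rcases a with _ | ⟨c, _ | _ | _⟩ <;> rfl

lemma sneg_pos (c : Γ) : sneg (some (c, SSign.pos) : Smax Γ) = some (c, SSign.neg) := rfl
lemma sneg_neg (c : Γ) : sneg (some (c, SSign.neg) : Smax Γ) = some (c, SSign.pos) := rfl
lemma sneg_bal (c : Γ) : sneg (some (c, SSign.bal) : Smax Γ) = some (c, SSign.bal) := rfl

@[simp] lemma isBal_sneg {a : Smax Γ} : IsBal (sneg a) ↔ IsBal a := by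
  rcases a with _ | ⟨c, _ | _ | _⟩ <;> simp [sneg_pos, sneg_neg, sneg_bal, isBal_some]

lemma sneg_mul (a b : Smax Γ) : sneg (a * b) = sneg a * b := by
  rcases a with _ | ⟨c, s⟩
  · rfl
  rcases b with _ | ⟨d, t⟩
  · cases s <;> rfl
  cases s <;> cases t <;> rfl

lemma smod_sneg (a : Smax Γ) : smod (sneg a) = smod a := by
  rcases a with _ | ⟨c, _ | _ | _⟩ <;> rfl

lemma sneg_add (a b : Smax Γ) : sneg (a + b) = sneg a + sneg b := by
  rcases a with _ | ⟨c, s⟩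
  · rfl
  rcases b with _ | ⟨d, t⟩
  · cases s <;> rfl
  rw [plus_eq_sadd, plus_eq_sadd]
  rcases lt_trichotomy c d with h | h | h
  · cases s <;> cases t <;>
      simp only [sneg_pos, sneg_neg, sneg_bal, sadd_lt h] <;> rfl
  · subst h
    cases s <;> cases t <;>
      simp only [sneg_pos, sneg_neg, sneg_bal, sadd_eqm] <;> rfl
  · cases s <;> cases t <;>
      simp only [sneg_pos, sneg_neg, sneg_bal, sadd_gt h] <;> rfl

lemma add_sneg_self (a : Smax Γ) : IsBal (a + sneg a) := by
  rcases a with _ | ⟨c, s⟩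
  · exact trivial
  rw [plus_eq_sadd]
  cases s <;> simp only [sneg_pos, sneg_neg, sneg_bal, sadd_eqm] <;> exact rfl

/-- the additive-monoid hom given by ⊖ -/
def snegHom : Smax Γ →+ Smax Γ where
  toFun := sneg
  map_zero' := rfl
  map_add' := sneg_add

@[simp] lemma smod_zero : smod (0 : Smax Γ) = ⊥ := rfl
@[simp] lemma smod_some (c : Γ) (s : SSign) : smod (some (c, s) : Smax Γ) = (c : WithBot Γ) := rfl

lemma smod_eq_bot {a : Smax Γ} : smod a = ⊥ ↔ a = 0 := by
  rcases a with _ | ⟨c, s⟩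
  · simp
  · rw [smod_some]
    constructor
    · intro h; exact absurd h (WithBot.coe_ne_bot)
    · intro h; exact absurd h (Option.some_ne_none _)

lemma smod_add (a b : Smax Γ) : smod (a + b) = max (smod a) (smod b) := by
  rcases a with _ | ⟨c, s⟩
  · rw [none_eq_zero, zero_add, smod_zero, max_eq_right (bot_le : (⊥ : WithBot Γ) ≤ smod b)]
  rcases b with _ | ⟨d, t⟩
  · rw [none_eq_zero, add_zero, smod_zero, max_eq_left (bot_le : (⊥ : WithBot Γ) ≤ _)]
  rw [plus_eq_sadd]
  rcases lt_trichotomy c d with h | h | h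
  · rw [sadd_lt h]
    simp [max_eq_right (le_of_lt (WithBot.coe_lt_coe.2 h))]
  · subst h; rw [sadd_eqm]; simp
  · rw [sadd_gt h]
    simp [max_eq_left (le_of_lt (WithBot.coe_lt_coe.2 h))]

lemma smod_mul (a b : Smax Γ) : smod (a * b) = smod a + smod b := by
  rcases a with _ | ⟨c, s⟩
  · rw [none_eq_zero, zero_mul]; simp
  rcases b with _ | ⟨d, t⟩
  · rw [none_eq_zero, mul_zero]; simp
  rw [times_eq_smul, smul_some_some]; simp [WithBot.coe_add]

@[simp] lemma isSigned_zero : IsSigned (0 : Smax Γ) := trivial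
lemma isSigned_some {c : Γ} {s : SSign} : IsSigned (some (c, s) : Smax Γ) ↔ s ≠ SSign.bal :=
  Iff.rfl

lemma isSigned_mul {a b : Smax Γ} (ha : IsSigned a) (hb : IsSigned b) : IsSigned (a * b) := by
  rcases a with _ | ⟨c, s⟩
  · rw [none_eq_zero, zero_mul]; exact trivial
  rcases b with _ | ⟨d, t⟩
  · rw [none_eq_zero, mul_zero]; exact trivial
  rw [times_eq_smul, smul_some_some]
  rw [isSigned_some] at ha hb ⊢
  cases s <;> cases t <;> simp_all [sgnMul]

lemma mul_ne_zero' {a b : Smax Γ} (ha : a ≠ 0) (hb : b ≠ 0) : a * b ≠ 0 := by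
  rcases a with _ | ⟨c, s⟩
  · exact absurd rfl ha
  rcases b with _ | ⟨d, t⟩
  · exact absurd rfl hb
  rw [times_eq_smul, smul_some_some]
  exact Option.some_ne_none _

lemma isSigned_sneg {a : Smax Γ} (ha : IsSigned a) : IsSigned (sneg a) := by
  rcases a with _ | ⟨c, _ | _ | _⟩ <;>
    simp_all [sneg_pos, sneg_neg, sneg_bal, isSigned_some]

/-- two signed elements that balance each other are equal -/
lemma signed_eq_of_bal {a b : Smax Γ} (ha : IsSigned a) (hb : IsSigned b)
    (h : IsBal (a + sneg b)) : a = b := by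
  rcases a with _ | ⟨c, s⟩
  · rcases b with _ | ⟨d, t⟩
    · rfl
    · rw [none_eq_zero, zero_add, isBal_sneg] at h
      rw [isSigned_some] at hb
      exact absurd (isBal_some.1 h) hb
  · rcases b with _ | ⟨d, t⟩
    · rw [show sneg (none : Smax Γ) = 0 from rfl, add_zero] at h
      rw [isSigned_some] at ha
      exact absurd (isBal_some.1 h) ha
    · rw [isSigned_some] at ha hb
      rw [plus_eq_sadd] at h
      rcases lt_trichotomy c d with hcd | hcd | hcd
      · exfalso
        cases t <;> simp only [sneg_pos, sneg_neg, sneg_bal] at h <;>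
          rw [sadd_lt hcd] at h <;> rw [isBal_some] at h <;> simp_all
      · subst hcd
        cases s <;> cases t <;>
          simp only [sneg_pos, sneg_neg, sneg_bal] at h <;>
          rw [sadd_eqm] at h <;> rw [isBal_some] at h <;> simp_all [cmb]
      · exfalso
        cases t <;> simp only [sneg_pos, sneg_neg, sneg_bal] at h <;>
          rw [sadd_gt hcd] at h <;> rw [isBal_some] at h <;> simp_all

end SmaxBal

section SmaxSums
variable {Γ : Type} [AddCommGroup Γ] [LinearOrder Γ] [IsOrderedAddMonoid Γ] {α : Type}

lemma add_eq_zero' {a b : Smax Γ} (h : a + b = 0) : a = 0 ∧ b = 0 := by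
  rcases a with _ | ⟨c, s⟩
  · exact ⟨rfl, by rwa [none_eq_zero, zero_add] at h⟩
  rcases b with _ | ⟨d, t⟩
  · exact ⟨by rwa [none_eq_zero, add_zero] at h, rfl⟩
  exfalso
  rw [plus_eq_sadd] at h
  rcases lt_trichotomy c d with hcd | hcd | hcd
  · rw [sadd_lt hcd] at h; exact Option.some_ne_none _ h
  · subst hcd; rw [sadd_eqm] at h; exact Option.some_ne_none _ h
  · rw [sadd_gt hcd] at h; exact Option.some_ne_none _ h

lemma add_signed_cases {a b : Smax Γ} {t : Γ} {ε : SSign} (hε : ε ≠ SSign.bal)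
    (h : a + b = some (t, ε)) :
    (a = some (t, ε) ∨ smod a < (t : WithBot Γ)) ∧
      (b = some (t, ε) ∨ smod b < (t : WithBot Γ)) := by
  rcases a with _ | ⟨c, s⟩
  · rw [none_eq_zero, zero_add] at h
    exact ⟨Or.inr (by simp [WithBot.bot_lt_coe]), Or.inl h⟩
  rcases b with _ | ⟨d, u⟩
  · rw [none_eq_zero, add_zero] at h
    exact ⟨Or.inl h, Or.inr (by simp [WithBot.bot_lt_coe])⟩
  rw [plus_eq_sadd] at h
  rcases lt_trichotomy c d with hcd | hcd | hcd
  · rw [sadd_lt hcd] at h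
    obtain ⟨hd, hu⟩ : d = t ∧ u = ε := Prod.ext_iff.1 (Option.some.inj h)
    subst hd; subst hu
    exact ⟨Or.inr (by simpa using WithBot.coe_lt_coe.2 hcd), Or.inl rfl⟩
  · subst hcd
    rw [sadd_eqm] at h
    obtain ⟨hd, hu⟩ : c = t ∧ cmb s u = ε := Prod.ext_iff.1 (Option.some.inj h)
    subst hd
    have hsu : s = ε ∧ u = ε := by
      by_cases hc : s = u
      · rw [cmb, if_pos hc] at hu; exact ⟨hu, hc ▸ hu⟩
      · rw [cmb, if_neg hc] at hu; exact absurd hu.symm hε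
    exact ⟨Or.inl (by rw [hsu.1]), Or.inl (by rw [hsu.2])⟩
  · rw [sadd_gt hcd] at h
    obtain ⟨hd, hu⟩ : c = t ∧ s = ε := Prod.ext_iff.1 (Option.some.inj h)
    subst hd; subst hu
    exact ⟨Or.inl rfl, Or.inr (by simpa using WithBot.coe_lt_coe.2 hcd)⟩

lemma sum_eq_zero_all {s : Finset α} {f : α → Smax Γ} (h : ∑ a ∈ s, f a = 0) :
    ∀ a ∈ s, f a = 0 := by
  classical
  intro a ha
  rw [← Finset.add_sum_erase s f ha] at h
  exact (add_eq_zero' h).1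

lemma smod_sum_le {s : Finset α} {f : α → Smax Γ} {a : α} (ha : a ∈ s) :
    smod (f a) ≤ smod (∑ x ∈ s, f x) := by
  classical
  rw [← Finset.add_sum_erase s f ha, smod_add]
  exact le_max_left _ _

lemma sum_signed_cases {s : Finset α} {f : α → Smax Γ} {t : Γ} {ε : SSign}
    (hε : ε ≠ SSign.bal) (h : ∑ a ∈ s, f a = some (t, ε)) :
    ∀ a ∈ s, f a = some (t, ε) ∨ smod (f a) < (t : WithBot Γ) := by
  classical
  intro a ha
  rw [← Finset.add_sum_erase s f ha] at h
  exact (add_signed_cases hε h).1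

@[simp] lemma smod_none : smod (none : Smax Γ) = ⊥ := rfl

lemma sum_attain {s : Finset α} {f : α → Smax Γ} {μ : Γ}
    (h : smod (∑ a ∈ s, f a) = (μ : WithBot Γ)) : ∃ a ∈ s, smod (f a) = (μ : WithBot Γ) := by
  classical
  induction s using Finset.cons_induction with
  | empty => rw [Finset.sum_empty, smod_zero] at h; exact absurd h WithBot.bot_ne_coe
  | cons a s' ha ih =>
    rw [Finset.sum_cons, smod_add] at h
    rcases max_choice (smod (f a)) (smod (∑ b ∈ s', f b)) with hc | hc
    · exact ⟨a, Finset.mem_cons_self _ _, by rw [← hc, h]⟩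
    · obtain ⟨b, hb, hb2⟩ := ih (by rw [← hc, h])
      exact ⟨b, Finset.mem_cons_of_mem hb, hb2⟩

lemma isBal_sum {s : Finset α} {f : α → Smax Γ} (h : ∀ a ∈ s, IsBal (f a)) :
    IsBal (∑ a ∈ s, f a) := by
  classical
  induction s using Finset.cons_induction with
  | empty => simp
  | cons a s' ha ih =>
    rw [Finset.sum_cons]
    exact isBal_add (h a (Finset.mem_cons_self _ _))
      (ih fun b hb => h b (Finset.mem_cons_of_mem hb))

lemma sum_bal_top {s : Finset α} {f : α → Smax Γ} {μ : Γ}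
    (h : ∑ a ∈ s, f a = some (μ, SSign.bal))
    (hnb : ∀ a ∈ s, ¬(IsBal (f a) ∧ smod (f a) = (μ : WithBot Γ))) :
    (∃ a ∈ s, f a = some (μ, SSign.pos)) ∧ (∃ a ∈ s, f a = some (μ, SSign.neg)) := by
  classical
  induction s using Finset.cons_induction with
  | empty => exact absurd h.symm (Option.some_ne_none _)
  | cons a s' ha ih =>
    rw [Finset.sum_cons] at h
    have hnb' : ∀ b ∈ s', ¬(IsBal (f b) ∧ smod (f b) = (μ : WithBot Γ)) :=
      fun b hb => hnb b (Finset.mem_cons_of_mem hb)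
    have step : (∃ x ∈ s', f x = some (μ, SSign.pos)) ∧ (∃ x ∈ s', f x = some (μ, SSign.neg)) →
        (∃ x ∈ Finset.cons a s' ha, f x = some (μ, SSign.pos)) ∧
        (∃ x ∈ Finset.cons a s' ha, f x = some (μ, SSign.neg)) := by
      rintro ⟨⟨x, hx, h1⟩, ⟨y, hy, h2⟩⟩
      exact ⟨⟨x, Finset.mem_cons_of_mem hx, h1⟩, ⟨y, Finset.mem_cons_of_mem hy, h2⟩⟩
    rcases hfa : f a with _ | ⟨c, sa⟩
    · rw [hfa, none_eq_zero, zero_add] at h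
      exact step (ih h hnb')
    rcases hW : (∑ b ∈ s', f b) with _ | ⟨d, t'⟩
    · rw [hfa, hW, none_eq_zero, add_zero] at h
      exfalso
      exact hnb a (Finset.mem_cons_self _ _) (by rw [hfa, h]; exact ⟨rfl, rfl⟩)
    rw [hfa, hW, plus_eq_sadd] at h
    rcases lt_trichotomy c d with hcd | hcd | hcd
    · rw [sadd_lt hcd] at h
      rw [h] at hW
      exact step (ih hW hnb')
    · subst hcd
      rw [sadd_eqm] at h
      obtain ⟨hc, hs⟩ : c = μ ∧ cmb sa t' = SSign.bal := Prod.ext_iff.1 (Option.some.inj h)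
      subst hc
      cases sa with
      | bal =>
        exfalso
        exact hnb a (Finset.mem_cons_self _ _) (by rw [hfa]; exact ⟨rfl, rfl⟩)
      | pos =>
        cases t' with
        | pos => exact absurd hs (by simp [cmb])
        | bal => exact step (ih hW hnb')
        | neg =>
          refine ⟨⟨a, Finset.mem_cons_self _ _, hfa⟩, ?_⟩
          obtain ⟨b, hb, hb2⟩ := sum_attain (by rw [hW, smod_some])
          rcases sum_signed_cases (by simp) hW b hb with h1 | h1
          · exact ⟨b, Finset.mem_cons_of_mem hb, h1⟩
          · exact absurd hb2 (ne_of_lt h1)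
      | neg =>
        cases t' with
        | neg => exact absurd hs (by simp [cmb])
        | bal => exact step (ih hW hnb')
        | pos =>
          refine ⟨?_, ⟨a, Finset.mem_cons_self _ _, hfa⟩⟩
          obtain ⟨b, hb, hb2⟩ := sum_attain (by rw [hW, smod_some])
          rcases sum_signed_cases (by simp) hW b hb with h1 | h1
          · exact ⟨b, Finset.mem_cons_of_mem hb, h1⟩
          · exact absurd hb2 (ne_of_lt h1)
    · rw [sadd_gt hcd] at h
      exfalso
      refine hnb a (Finset.mem_cons_self _ _) ?_
      rw [hfa, h]
      exact ⟨rfl, rfl⟩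

/-- pairing lemma: a sum whose terms cancel in pairs is balanced -/
lemma isBal_sum_pairing [DecidableEq α] {f : α → Smax Γ} (s : Finset α) (g : α → α)
    (hmem : ∀ a ∈ s, g a ∈ s) (hinv : ∀ a ∈ s, g (g a) = a) (hne : ∀ a ∈ s, g a ≠ a)
    (hpair : ∀ a ∈ s, IsBal (f a + f (g a))) : IsBal (∑ a ∈ s, f a) := by
  induction s using Finset.strongInduction with
  | _ s ih =>
    rcases Finset.eq_empty_or_nonempty s with rfl | ⟨a, ha⟩
    · simp
    have hga : g a ∈ s.erase a := Finset.mem_erase.2 ⟨hne a ha, hmem a ha⟩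
    set s' := (s.erase a).erase (g a) with hs'
    have hss : s' ⊂ s := by
      refine Finset.ssubset_of_subset_of_ssubset ?_ (Finset.erase_ssubset ha)
      exact Finset.erase_subset _ _
    have hsum : ∑ x ∈ s, f x = (f a + f (g a)) + ∑ x ∈ s', f x := by
      rw [← Finset.add_sum_erase s f ha, ← Finset.add_sum_erase _ f hga, ← add_assoc]
    rw [hsum]
    have hmem' : ∀ x ∈ s', x ∈ s := fun x hx =>
      Finset.mem_of_mem_erase (Finset.mem_of_mem_erase hx)
    refine isBal_add (hpair a ha) (ih s' hss ?_ ?_ ?_ ?_)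
    · intro x hx
      have hxs := hmem' x hx
      have h1 : g x ≠ g a := fun hgg => by
        have : x = a := by
          have := congrArg g hgg
          rwa [hinv x hxs, hinv a ha] at this
        exact (Finset.ne_of_mem_erase (Finset.mem_of_mem_erase hx)) this
      have h2 : g x ≠ a := fun hgg => by
        have hxga : x = g a := by
          have := congrArg g hgg
          rwa [hinv x hxs] at this
        exact (Finset.ne_of_mem_erase hx) hxga
      exact Finset.mem_erase.2 ⟨h1, Finset.mem_erase.2 ⟨h2, hmem x hxs⟩⟩
    · exact fun x hx => hinv x (hmem' x hx)
    · exact fun x hx => hne x (hmem' x hx)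
    · exact fun x hx => hpair x (hmem' x hx)

/-! bridges between the bespoke list sums/products and `Finset` sums/products -/

lemma sumS_eq_sum (l : List α) (f : α → Smax Γ) : sumS l f = (l.map f).sum := by
  rw [List.sum_eq_foldr]; rfl

lemma sumS_toList (s : Finset α) (f : α → Smax Γ) : sumS s.toList f = ∑ a ∈ s, f a := by
  rw [sumS_eq_sum, Finset.sum_map_toList]

lemma sumS_finRange {n : ℕ} (f : Fin n → Smax Γ) :
    sumS (List.finRange n) f = ∑ i, f i := by
  rw [sumS_eq_sum, ← Fin.sum_univ_def]

lemma prodS_eq_prod (l : List α) (f : α → Smax Γ) : prodS l f = (l.map f).prod := by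
  rw [List.prod_eq_foldr]; rfl

lemma prodS_finRange {n : ℕ} (f : Fin n → Smax Γ) :
    prodS (List.finRange n) f = ∏ i, f i := by
  rw [prodS_eq_prod, ← Fin.prod_univ_def]

lemma detS_eq_sum {n : ℕ} (M : Matrix (Fin n) (Fin n) (Smax Γ)) :
    detS M = ∑ π : Equiv.Perm (Fin n), permSignS π * ∏ i, M i (π i) := by
  rw [detS, sumS_toList]
  refine Finset.sum_congr rfl fun π _ => ?_
  rw [prodS_finRange]
  rfl

end SmaxSums

section SmaxDet
variable {Γ : Type} [AddCommGroup Γ] [LinearOrder Γ] [IsOrderedAddMonoid Γ]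

lemma sneg_one_mul_sneg_one : (sneg 1 : Smax Γ) * sneg 1 = 1 := by
  rw [show (sneg (1 : Smax Γ)) = some ((0 : Γ), SSign.neg) from rfl, times_eq_smul,
    smul_some_some, zero_add]
  rfl

lemma sneg_eq_negone_mul (a : Smax Γ) : sneg a = sneg 1 * a := by
  rcases a with _ | ⟨c, s⟩
  · rw [none_eq_zero, sneg_zero, mul_zero]
  rw [show (sneg (1 : Smax Γ)) = some ((0 : Γ), SSign.neg) from rfl, times_eq_smul,
    smul_some_some, zero_add]
  cases s <;> rfl

lemma spow_eq_pow (a : Smax Γ) (k : ℕ) : spow a k = a ^ k := by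
  induction k with
  | zero => rfl
  | succ k ih =>
    show smul a (spow a k) = a ^ (k + 1)
    rw [ih, pow_succ, mul_comm]
    rfl

/-- the sign ±𝟙 ∈ 𝕊max attached to a unit of ℤ -/
def gps (u : ℤˣ) : Smax Γ := if u = 1 then 1 else sneg 1

lemma gps_mul (u v : ℤˣ) : (gps (u * v) : Smax Γ) = gps u * gps v := by
  rcases Int.units_eq_one_or u with rfl | rfl <;>
    rcases Int.units_eq_one_or v with rfl | rfl <;>
    simp [gps, sneg_one_mul_sneg_one]

lemma gps_neg_one_pow (k : ℕ) : (gps ((-1) ^ k) : Smax Γ) = (sneg 1) ^ k := by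
  induction k with
  | zero => simp [gps]
  | succ k ih =>
    rw [pow_succ, gps_mul, ih, pow_succ]
    simp [gps]

lemma permSignS_eq_gps {n : ℕ} (π : Equiv.Perm (Fin n)) :
    (permSignS π : Smax Γ) = gps (Equiv.Perm.sign π) := by
  unfold permSignS gps
  rcases Int.units_eq_one_or (Equiv.Perm.sign π) with h | h <;> rw [h] <;> simp

lemma permSignS_mul {n : ℕ} (σ π : Equiv.Perm (Fin n)) :
    (permSignS (σ * π) : Smax Γ) = permSignS σ * permSignS π := by
  rw [permSignS_eq_gps, permSignS_eq_gps, permSignS_eq_gps, map_mul, gps_mul]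

lemma permSignS_swap {n : ℕ} {i j : Fin n} (hij : i ≠ j) :
    (permSignS (Equiv.swap i j) : Smax Γ) = sneg 1 := by
  rw [permSignS_eq_gps, Equiv.Perm.sign_swap hij]
  simp [gps]

/-- the permutation of `Fin (n+1)` sending `j ↦ l` and `j.succAbove a ↦ l.succAbove (σ a)` -/
def permAt {n : ℕ} (j l : Fin (n + 1)) (σ : Equiv.Perm (Fin n)) : Equiv.Perm (Fin (n + 1)) :=
  (finSuccEquiv' j).trans ((Equiv.optionCongr σ).trans (finSuccEquiv' l).symm)

lemma permAt_self {n : ℕ} (j l : Fin (n + 1)) (σ : Equiv.Perm (Fin n)) :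
    permAt j l σ j = l := by
  simp [permAt, finSuccEquiv'_at, finSuccEquiv'_symm_none]

lemma permAt_succAbove {n : ℕ} (j l : Fin (n + 1)) (σ : Equiv.Perm (Fin n)) (a : Fin n) :
    permAt j l σ (j.succAbove a) = l.succAbove (σ a) := by
  simp [permAt, finSuccEquiv'_succAbove, finSuccEquiv'_symm_some]

/-- decomposition of permutations of `Fin (n+1)` by the image of `j` -/
def permDecomp {n : ℕ} (j : Fin (n + 1)) :
    (Fin (n + 1) × Equiv.Perm (Fin n)) ≃ Equiv.Perm (Fin (n + 1)) where
  toFun p := permAt j p.1 p.2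
  invFun π :=
    (π j, Equiv.removeNone ((finSuccEquiv' j).symm.trans (π.trans (finSuccEquiv' (π j)))))
  left_inv p := by
    obtain ⟨l, σ⟩ := p
    have h1 : permAt j l σ j = l := permAt_self j l σ
    refine Prod.ext h1 ?_
    · show Equiv.removeNone _ = σ
      apply Equiv.ext
      intro a
      apply Option.some_injective
      have hex : ((finSuccEquiv' j).symm.trans ((permAt j l σ : Equiv.Perm (Fin (n+1))).trans
          (finSuccEquiv' (permAt j l σ j)))) (some a) = some (σ a) := by
        simp [h1, finSuccEquiv'_symm_some, permAt_succAbove, finSuccEquiv'_succAbove]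
      rw [Equiv.removeNone_some _ ⟨σ a, hex⟩, hex]
  right_inv π := by
    apply Equiv.ext
    intro x
    set e := (finSuccEquiv' j).symm.trans (π.trans (finSuccEquiv' (π j))) with he
    rcases eq_or_ne x j with rfl | hx
    · rw [permAt_self]
    · obtain ⟨a, rfl⟩ := Fin.exists_succAbove_eq (Ne.symm hx).symm
      rw [permAt_succAbove]
      have hne : π (j.succAbove a) ≠ π j := fun hc =>
        Fin.succAbove_ne j a (π.injective hc)
      obtain ⟨b, hb⟩ := Fin.exists_succAbove_eq hne
      have hex : e (some a) = some b := by
        rw [he]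
        simp only [Equiv.trans_apply, finSuccEquiv'_symm_some, ← hb,
          finSuccEquiv'_succAbove]
      have := Equiv.removeNone_some e ⟨b, hex⟩
      rw [hex] at this
      have hrn : Equiv.removeNone e a = b := Option.some_injective _ this
      rw [hrn, hb]

lemma permAt_decomp {n : ℕ} (j l : Fin (n + 1)) (σ : Equiv.Perm (Fin n)) :
    permAt j l σ = permAt j l 1 * permAt j j σ := by
  apply Equiv.ext
  intro x
  rcases eq_or_ne x j with rfl | hx
  · rw [permAt_self, Equiv.Perm.mul_apply, permAt_self, permAt_self]
  · obtain ⟨a, rfl⟩ := Fin.exists_succAbove_eq (Ne.symm hx).symm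
    rw [permAt_succAbove, Equiv.Perm.mul_apply, permAt_succAbove, permAt_succAbove,
      Equiv.Perm.one_apply]

lemma sign_permAt_conj {n : ℕ} (j : Fin (n + 1)) (σ : Equiv.Perm (Fin n)) :
    Equiv.Perm.sign (permAt j j σ) = Equiv.Perm.sign σ := by
  have : permAt j j σ = Equiv.permCongr (finSuccEquiv' j).symm (Equiv.optionCongr σ) := by
    rw [Equiv.permCongr_def, Equiv.symm_symm, Equiv.trans_assoc]
    rfl
  rw [this, Equiv.Perm.sign_permCongr, Equiv.optionCongr_sign]

lemma permAt_zero_eq {n : ℕ} (l : Fin (n + 1)) :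
    permAt 0 l 1 = (Fin.cycleRange l)⁻¹ := by
  apply Equiv.ext
  intro x
  have key : Fin.cycleRange l (permAt 0 l 1 x) = x := by
    rcases Fin.eq_zero_or_eq_succ x with rfl | ⟨a, rfl⟩
    · rw [permAt_self, Fin.cycleRange_self]
    · rw [show (a.succ : Fin (n+1)) = (0 : Fin (n+1)).succAbove a from (Fin.zero_succAbove a).symm,
        permAt_succAbove, Equiv.Perm.one_apply, Fin.cycleRange_succAbove, Fin.zero_succAbove]
  have h2 := congrArg (fun y => (Fin.cycleRange l)⁻¹ y) key
  simpa using h2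

lemma sign_permAt_zero {n : ℕ} (l : Fin (n + 1)) :
    Equiv.Perm.sign (permAt 0 l 1) = (-1) ^ (l : ℕ) := by
  rw [permAt_zero_eq, Equiv.Perm.sign_inv, Fin.sign_cycleRange]

lemma permAt_one_decomp {n : ℕ} (j l : Fin (n + 1)) :
    permAt j l 1 = permAt 0 l 1 * (permAt 0 j 1)⁻¹ := by
  rw [eq_mul_inv_iff_mul_eq]
  apply Equiv.ext
  intro x
  rcases Fin.eq_zero_or_eq_succ x with rfl | ⟨a, rfl⟩
  · rw [Equiv.Perm.mul_apply, permAt_self, permAt_self, permAt_self]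
  · rw [show (a.succ : Fin (n+1)) = (0 : Fin (n+1)).succAbove a from (Fin.zero_succAbove a).symm,
      Equiv.Perm.mul_apply, permAt_succAbove, permAt_succAbove, permAt_succAbove]
    simp

lemma units_inv_self (u : ℤˣ) : u⁻¹ = u := by
  rcases Int.units_eq_one_or u with rfl | rfl <;> rfl

lemma sign_permAt {n : ℕ} (j l : Fin (n + 1)) (σ : Equiv.Perm (Fin n)) :
    Equiv.Perm.sign (permAt j l σ) = (-1) ^ ((j : ℕ) + (l : ℕ)) * Equiv.Perm.sign σ := by
  rw [permAt_decomp, map_mul, sign_permAt_conj, permAt_one_decomp, map_mul, map_inv,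
    sign_permAt_zero, sign_permAt_zero, units_inv_self, ← pow_add, Nat.add_comm]

lemma permSignS_permAt {n : ℕ} (j l : Fin (n + 1)) (σ : Equiv.Perm (Fin n)) :
    (permSignS (permAt j l σ) : Smax Γ) = (sneg 1) ^ ((j : ℕ) + (l : ℕ)) * permSignS σ := by
  rw [permSignS_eq_gps, sign_permAt, gps_mul, gps_neg_one_pow, permSignS_eq_gps]

/-- the minor of `M` obtained by deleting row `j` and column `l` -/
def minorS {n : ℕ} (M : Matrix (Fin (n + 1)) (Fin (n + 1)) (Smax Γ)) (j l : Fin (n + 1)) :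
    Matrix (Fin n) (Fin n) (Smax Γ) :=
  Matrix.of fun a b => M (j.succAbove a) (l.succAbove b)

/-- Laplace expansion of the 𝕊max determinant along row `j` -/
theorem detS_laplace {n : ℕ} (M : Matrix (Fin (n + 1)) (Fin (n + 1)) (Smax Γ))
    (j : Fin (n + 1)) :
    detS M = ∑ l, M j l * ((sneg 1) ^ ((j : ℕ) + (l : ℕ)) * detS (minorS M j l)) := by
  rw [detS_eq_sum, ← Equiv.sum_comp (permDecomp j)
    (fun π => permSignS π * ∏ i, M i (π i)), Fintype.sum_prod_type]
  refine Finset.sum_congr rfl fun l _ => ?_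
  have hterm : ∀ σ : Equiv.Perm (Fin n),
      (permSignS (permDecomp j (l, σ)) : Smax Γ) * ∏ i, M i (permDecomp j (l, σ) i)
        = M j l * ((sneg 1) ^ ((j : ℕ) + (l : ℕ)) * (permSignS σ * ∏ a, minorS M j l a (σ a))) := by
    intro σ
    have happ : permDecomp j (l, σ) = permAt j l σ := rfl
    rw [happ, Fin.prod_univ_succAbove (fun i => M i (permAt j l σ i)) j, permAt_self,
      permSignS_permAt]
    have hmin : ∀ a, M (j.succAbove a) (permAt j l σ (j.succAbove a)) = minorS M j l a (σ a) := by
      intro a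
      rw [permAt_succAbove]
      rfl
    rw [Finset.prod_congr rfl fun a _ => hmin a]
    ring
  rw [Finset.sum_congr rfl fun σ _ => hterm σ, ← Finset.mul_sum, ← Finset.mul_sum,
    ← detS_eq_sum]

lemma adjS_eq {n : ℕ} (M : Matrix (Fin (n + 1)) (Fin (n + 1)) (Smax Γ)) (i j : Fin (n + 1)) :
    adjS M i j = (sneg 1) ^ ((j : ℕ) + (i : ℕ)) * detS (minorS M j i) := by
  show smul (spow (sneg sone) ((i : ℕ) + (j : ℕ))) _ = _
  rw [spow_eq_pow, Nat.add_comm (i : ℕ) (j : ℕ)]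
  rfl

/-- Laplace expansion in adjugate form -/
theorem detS_laplace_adj {n : ℕ} (M : Matrix (Fin (n + 1)) (Fin (n + 1)) (Smax Γ))
    (j : Fin (n + 1)) :
    detS M = ∑ l, M j l * adjS M l j := by
  rw [detS_laplace M j]
  exact Finset.sum_congr rfl fun l _ => by rw [adjS_eq]

/-- a matrix with two equal rows has balanced determinant -/
theorem detS_isBal_of_rows_eq {n : ℕ} (M : Matrix (Fin n) (Fin n) (Smax Γ)) (i j : Fin n)
    (hij : i ≠ j) (hrows : M i = M j) : IsBal (detS M) := by
  classical
  rw [detS_eq_sum]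
  have hMswap : ∀ r, M (Equiv.swap i j r) = M r := by
    intro r
    rcases eq_or_ne r i with rfl | hr1
    · rw [Equiv.swap_apply_left]; exact hrows.symm
    rcases eq_or_ne r j with rfl | hr2
    · rw [Equiv.swap_apply_right]; exact hrows
    · rw [Equiv.swap_apply_of_ne_of_ne hr1 hr2]
  apply isBal_sum_pairing Finset.univ (fun π => π * Equiv.swap i j)
  · intro a _; exact Finset.mem_univ _
  · intro π _
    rw [mul_assoc, Equiv.swap_mul_self, mul_one]
  · intro π _
    intro hc
    have : Equiv.swap i j = 1 := by
      have := congrArg (fun ρ => π⁻¹ * ρ) hc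
      simpa [← mul_assoc] using this
    exact hij (by rw [← Equiv.swap_apply_left i j, this, Equiv.Perm.one_apply])
  · intro π _
    have hprod : (∏ r, M r ((π * Equiv.swap i j) r)) = ∏ r, M r (π r) := by
      calc ∏ r, M r ((π * Equiv.swap i j) r)
          = ∏ r, M (Equiv.swap i j r) ((π * Equiv.swap i j) (Equiv.swap i j r)) :=
            (Equiv.prod_comp (Equiv.swap i j)
              (fun r => M r ((π * Equiv.swap i j) r))).symm
        _ = ∏ r, M (Equiv.swap i j r) (π r) := by
            refine Finset.prod_congr rfl fun r _ => ?_
            rw [Equiv.Perm.mul_apply, Equiv.swap_apply_self]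
        _ = ∏ r, M r (π r) := Finset.prod_congr rfl fun r _ => by rw [hMswap r]
    rw [hprod, permSignS_mul, permSignS_swap hij]
    have : (permSignS π : Smax Γ) * sneg 1 * ∏ r, M r (π r)
        = sneg (permSignS π * ∏ r, M r (π r)) := by
      conv_rhs => rw [sneg_eq_negone_mul]
      ring
    rw [this]
    exact add_sneg_self _
end SmaxDet

section Lifting
variable {Γ : Type} [AddCommGroup Γ] [LinearOrder Γ] [IsOrderedAddMonoid Γ]

/-- all exponents in the support are ≤ c -/
instance : CoeFun (AddMonoidAlgebra ℝ Γ) (fun _ => Γ → ℝ) := ⟨fun x => x.coeff⟩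

def Bnd (x : AddMonoidAlgebra ℝ Γ) (c : Γ) : Prop := ∀ d ∈ x.coeff.support, d ≤ c

/-- `x` is a (loose) lift of the symmetrized tropical number `a` -/
def LiftR (x : AddMonoidAlgebra ℝ Γ) : Smax Γ → Prop
  | none => x = 0
  | some (c, SSign.pos) => Bnd x c ∧ 0 < x c
  | some (c, SSign.neg) => Bnd x c ∧ x c < 0
  | some (c, SSign.bal) => Bnd x c

lemma Bnd_mono {x : AddMonoidAlgebra ℝ Γ} {c c' : Γ} (h : Bnd x c) (hcc : c ≤ c') :
    Bnd x c' := fun d hd => (h d hd).trans hcc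

lemma Bnd_zero (c : Γ) : Bnd (0 : AddMonoidAlgebra ℝ Γ) c := by
  intro d hd; simp at hd

lemma Bnd_neg {x : AddMonoidAlgebra ℝ Γ} {c : Γ} (h : Bnd x c) : Bnd (-x) c := by
  intro d hd
  rw [AddMonoidAlgebra.coeff_neg, Finsupp.support_neg] at hd
  exact h d hd

lemma Bnd_add {x y : AddMonoidAlgebra ℝ Γ} {c : Γ} (hx : Bnd x c) (hy : Bnd y c) :
    Bnd (x + y) c := by
  intro d hd
  rcases Finset.mem_union.1 (Finsupp.support_add hd) with h | h
  · exact hx d h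
  · exact hy d h

lemma Bnd_sum {α : Type} {s : Finset α} {f : α → AddMonoidAlgebra ℝ Γ} {c : Γ}
    (h : ∀ a ∈ s, Bnd (f a) c) : Bnd (∑ a ∈ s, f a) c := by
  classical
  induction s using Finset.cons_induction with
  | empty => simpa using Bnd_zero c
  | cons a s' ha ih =>
    rw [Finset.sum_cons]
    exact Bnd_add (h a (Finset.mem_cons_self _ _))
      (ih fun b hb => h b (Finset.mem_cons_of_mem hb))

lemma Bnd_single (c : Γ) (e : ℝ) : Bnd (AddMonoidAlgebra.single c e) c := by
  intro d hd
  have := Finsupp.support_single_subset hd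
  simp at this
  exact this.le

lemma Bnd_mul {x y : AddMonoidAlgebra ℝ Γ} {c d : Γ} (hx : Bnd x c) (hy : Bnd y d) :
    Bnd (x * y) (c + d) := by
  classical
  intro e he
  have := AddMonoidAlgebra.support_coeff_mul_subset x y he
  rw [Finset.mem_add] at this
  obtain ⟨a, haa, b, hbb, rfl⟩ := this
  exact add_le_add (hx a haa) (hy b hbb)

lemma coeff_eq_zero_of_lt {x : AddMonoidAlgebra ℝ Γ} {c d : Γ} (hx : Bnd x c) (h : c < d) :
    x d = 0 := by
  by_contra hc
  exact absurd (hx d (Finsupp.mem_support_iff.2 hc)) (not_le.2 h)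

lemma mul_coeff_top {x y : AddMonoidAlgebra ℝ Γ} {c d : Γ} (hx : Bnd x c) (hy : Bnd y d) :
    (x * y) (c + d) = x c * y d := by
  classical
  rw [AddMonoidAlgebra.mul_apply]
  have key : ∀ a₁ ∈ x.coeff.support, (y.coeff.sum fun a₂ b₂ => if a₁ + a₂ = c + d then x a₁ * b₂ else 0)
      = if a₁ = c then x c * y d else 0 := by
    intro a₁ ha₁
    by_cases h1 : a₁ = c
    · subst h1
      rw [if_pos rfl, Finsupp.sum]
      by_cases h2 : d ∈ y.coeff.support
      · rw [Finset.sum_eq_single d]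
        · rw [if_pos rfl]
        · intro b hb hbd
          rw [if_neg]
          intro hcon
          exact hbd (by exact add_left_cancel hcon)
        · intro hd; exact absurd h2 hd
      · rw [Finset.sum_eq_zero, Finsupp.notMem_support_iff.1 h2, mul_zero]
        intro b hb
        rcases eq_or_ne b d with rfl | hbd
        · exact absurd hb h2
        · rw [if_neg (fun hcon => hbd (add_left_cancel hcon))]
    · rw [if_neg h1, Finsupp.sum, Finset.sum_eq_zero]
      intro b hb
      rw [if_neg]
      intro hcon
      have hac : a₁ < c := lt_of_le_of_ne (hx a₁ ha₁) h1
      have : a₁ + b < c + d := add_lt_add_of_lt_of_le hac (hy b hb)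
      exact absurd hcon (ne_of_lt this)
  rw [Finsupp.sum, Finset.sum_congr rfl key]
  by_cases hc : c ∈ x.coeff.support
  · rw [Finset.sum_eq_single c]
    · rw [if_pos rfl]
    · intro a ha hac; rw [if_neg hac]
    · intro h; exact absurd hc h
  · rw [Finset.sum_eq_zero, Finsupp.notMem_support_iff.1 hc, zero_mul]
    intro a ha
    rw [if_neg]
    intro hcon
    subst hcon
    exact absurd ha hc

lemma LiftR_Bnd {x : AddMonoidAlgebra ℝ Γ} {c : Γ} {s : SSign}
    (h : LiftR x (some (c, s))) : Bnd x c := by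
  cases s
  · exact h.1
  · exact h.1
  · exact h

lemma LiftR_zero_right {x : AddMonoidAlgebra ℝ Γ} (h : LiftR x (0 : Smax Γ)) : x = 0 := h

lemma LiftR_of_le {x : AddMonoidAlgebra ℝ Γ} {a : Smax Γ} {μ : Γ}
    (h : LiftR x a) (hle : smod a ≤ (μ : WithBot Γ)) : Bnd x μ := by
  rcases a with _ | ⟨c, s⟩
  · rw [LiftR_zero_right h]; exact Bnd_zero μ
  · rw [smod_some] at hle
    exact Bnd_mono (LiftR_Bnd h) (by exact_mod_cast hle)

lemma coeff_zero_of_smod_lt {x : AddMonoidAlgebra ℝ Γ} {a : Smax Γ} {μ : Γ}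
    (h : LiftR x a) (hlt : smod a < (μ : WithBot Γ)) : x μ = 0 := by
  rcases a with _ | ⟨c, s⟩
  · rw [LiftR_zero_right h]; rfl
  · rw [smod_some] at hlt
    exact coeff_eq_zero_of_lt (LiftR_Bnd h) (by exact_mod_cast hlt)

lemma LiftR_mul {x y : AddMonoidAlgebra ℝ Γ} {a b : Smax Γ}
    (hx : LiftR x a) (hy : LiftR y b) : LiftR (x * y) (a * b) := by
  rcases a with _ | ⟨c, s⟩
  · rw [LiftR_zero_right hx, zero_mul, none_eq_zero, zero_mul]; rfl
  rcases b with _ | ⟨d, t⟩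
  · rw [LiftR_zero_right hy, mul_zero, none_eq_zero, mul_zero]; rfl
  rw [times_eq_smul, smul_some_some]
  have hbx : Bnd x c := LiftR_Bnd hx
  have hby : Bnd y d := LiftR_Bnd hy
  have hbnd : Bnd (x * y) (c + d) := Bnd_mul hbx hby
  have hco : (x * y) (c + d) = x c * y d := mul_coeff_top hbx hby
  cases s <;> cases t <;>
    simp only [sgnMul] <;>
    first
      | exact hbnd
      | (exact ⟨hbnd, by rw [hco]; first
          | exact mul_pos hx.2 hy.2
          | exact mul_neg_of_pos_of_neg hx.2 hy.2
          | exact mul_neg_of_neg_of_pos hx.2 hy.2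
          | exact mul_pos_of_neg_of_neg hx.2 hy.2⟩)

lemma LiftR_neg {x : AddMonoidAlgebra ℝ Γ} {a : Smax Γ} (hx : LiftR x a) :
    LiftR (-x) (sneg a) := by
  rcases a with _ | ⟨c, _ | _ | _⟩
  · rw [LiftR_zero_right hx, neg_zero]; rfl
  · exact ⟨Bnd_neg hx.1, by rw [AddMonoidAlgebra.coeff_neg, Finsupp.neg_apply]; exact neg_neg_of_pos hx.2⟩
  · exact ⟨Bnd_neg hx.1, by rw [AddMonoidAlgebra.coeff_neg, Finsupp.neg_apply]; exact neg_pos.2 hx.2⟩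
  · exact Bnd_neg hx

lemma LiftR_one : LiftR (1 : AddMonoidAlgebra ℝ Γ) (1 : Smax Γ) := by
  constructor
  · rw [AddMonoidAlgebra.one_def]; exact Bnd_single 0 1
  · rw [AddMonoidAlgebra.one_def]
    rw [show (AddMonoidAlgebra.single (0:Γ) (1:ℝ)) 0 = 1 from Finsupp.single_eq_same]
    exact one_pos

lemma LiftR_prod {α : Type} {s : Finset α} {x : α → AddMonoidAlgebra ℝ Γ} {f : α → Smax Γ}
    (h : ∀ a ∈ s, LiftR (x a) (f a)) : LiftR (∏ a ∈ s, x a) (∏ a ∈ s, f a) := by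
  classical
  induction s using Finset.cons_induction with
  | empty => simpa using LiftR_one
  | cons a s' ha ih =>
    rw [Finset.prod_cons, Finset.prod_cons]
    exact LiftR_mul (h a (Finset.mem_cons_self _ _))
      (ih fun b hb => h b (Finset.mem_cons_of_mem hb))

/-- canonical monomial lift -/
noncomputable def liftW (ρ : ℝ) : Smax Γ → AddMonoidAlgebra ℝ Γ
  | none => 0
  | some (c, SSign.pos) => AddMonoidAlgebra.single c ρ
  | some (c, SSign.neg) => AddMonoidAlgebra.single c (-ρ)
  | some (_, SSign.bal) => 0

lemma liftW_pos (ρ : ℝ) (c : Γ) :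
    liftW ρ (some (c, SSign.pos)) = AddMonoidAlgebra.single c ρ := rfl
lemma liftW_neg (ρ : ℝ) (c : Γ) :
    liftW ρ (some (c, SSign.neg)) = AddMonoidAlgebra.single c (-ρ) := rfl
lemma liftW_bal (ρ : ℝ) (c : Γ) : liftW ρ (some (c, SSign.bal)) = 0 := rfl
lemma liftW_none (ρ : ℝ) : liftW ρ (none : Smax Γ) = 0 := rfl

lemma LiftR_liftW {ρ : ℝ} (hρ : 0 < ρ) (a : Smax Γ) : LiftR (liftW ρ a) a := by
  rcases a with _ | ⟨c, _ | _ | _⟩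
  · rfl
  · refine ⟨liftW_pos ρ c ▸ Bnd_single c ρ, ?_⟩
    rw [liftW_pos, AddMonoidAlgebra.coeff_single, Finsupp.single_eq_same]
    exact hρ
  · refine ⟨liftW_neg ρ c ▸ Bnd_single c (-ρ), ?_⟩
    rw [liftW_neg, AddMonoidAlgebra.coeff_single, Finsupp.single_eq_same]
    exact neg_neg_of_pos hρ
  · rw [liftW_bal]
    exact Bnd_zero _

end Lifting

section RowLift
variable {Γ : Type} [AddCommGroup Γ] [LinearOrder Γ] [IsOrderedAddMonoid Γ]

lemma mul_eq_zero_smax {a b : Smax Γ} (h : a * b = 0) : a = 0 ∨ b = 0 := by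
  by_contra hc
  push_neg at hc
  exact mul_ne_zero' hc.1 hc.2 h

lemma mul_some_decomp {a b : Smax Γ} {μ : Γ} {τ : SSign} (h : a * b = some (μ, τ)) :
    ∃ c s d t, a = some (c, s) ∧ b = some (d, t) ∧ c + d = μ ∧ sgnMul s t = τ := by
  rcases a with _ | ⟨c, s⟩
  · rw [none_eq_zero, zero_mul] at h; exact absurd h.symm (Option.some_ne_none _)
  rcases b with _ | ⟨d, t⟩
  · rw [none_eq_zero, mul_zero] at h; exact absurd h.symm (Option.some_ne_none _)
  rw [times_eq_smul, smul_some_some] at h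
  obtain ⟨h1, h2⟩ := Prod.ext_iff.1 (Option.some.inj h)
  exact ⟨c, s, d, t, rfl, rfl, h1, h2⟩

lemma sgnMul_eq_bal {s t : SSign} (ht : t ≠ SSign.bal) (h : sgnMul s t = SSign.bal) :
    s = SSign.bal := by
  cases s <;> cases t <;> simp_all [sgnMul]

lemma sgnMul_ne_bal {s t : SSign} (h : sgnMul s t ≠ SSign.bal) :
    s ≠ SSign.bal ∧ t ≠ SSign.bal := by
  cases s <;> cases t <;> simp_all [sgnMul]

/-- the coefficient at the top exponent of a lifted product of signed entries -/
lemma coeff_term {ρ : ℝ} {bb vv : Smax Γ} {μ : Γ} {τ : SSign}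
    (h : bb * vv = some (μ, τ)) (hτ : τ ≠ SSign.bal) :
    (liftW ρ bb * liftW 1 vv) μ = if τ = SSign.pos then ρ else -ρ := by
  obtain ⟨c, s, d, t, rfl, rfl, hsum, hsgn⟩ := mul_some_decomp h
  obtain ⟨hs, ht⟩ := sgnMul_ne_bal (hsgn ▸ hτ)
  subst hsum
  cases s with
  | bal => exact absurd rfl hs
  | pos =>
    cases t with
    | bal => exact absurd rfl ht
    | pos =>
      have hτ' : τ = SSign.pos := by rw [← hsgn]; rfl
      subst hτ'
      rw [liftW_pos, liftW_pos, AddMonoidAlgebra.single_mul_single, if_pos rfl,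
        AddMonoidAlgebra.coeff_single, Finsupp.single_eq_same, mul_one]
    | neg =>
      have hτ' : τ = SSign.neg := by rw [← hsgn]; rfl
      subst hτ'
      rw [liftW_pos, liftW_neg, AddMonoidAlgebra.single_mul_single,
        if_neg (by simp), AddMonoidAlgebra.coeff_single, Finsupp.single_eq_same]
      ring
  | neg =>
    cases t with
    | bal => exact absurd rfl ht
    | pos =>
      have hτ' : τ = SSign.neg := by rw [← hsgn]; rfl
      subst hτ'
      rw [liftW_neg, liftW_pos, AddMonoidAlgebra.single_mul_single,
        if_neg (by simp), AddMonoidAlgebra.coeff_single, Finsupp.single_eq_same]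
      ring
    | neg =>
      have hτ' : τ = SSign.pos := by rw [← hsgn]; rfl
      subst hτ'
      rw [liftW_neg, liftW_neg, AddMonoidAlgebra.single_mul_single, if_pos rfl,
        AddMonoidAlgebra.coeff_single, Finsupp.single_eq_same]
      ring

lemma liftW_zero (ρ : ℝ) : liftW ρ (0 : Smax Γ) = 0 := rfl

/-- lift of a signed nonzero element is a unit monomial -/
lemma liftW_one_signed {vv : Smax Γ} {d : Γ} {t : SSign} (hvv : vv = some (d, t))
    (ht : t ≠ SSign.bal) :
    ∃ e : ℝ, e * e = 1 ∧ liftW 1 vv = AddMonoidAlgebra.single d e ∧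
      (t = SSign.pos → e = 1) ∧ (t = SSign.neg → e = -1) := by
  cases t with
  | pos => exact ⟨1, by norm_num, by rw [hvv, liftW_pos], fun _ => rfl, by simp⟩
  | neg => exact ⟨-1, by norm_num, by rw [hvv, liftW_neg], by simp, fun _ => rfl⟩
  | bal => exact absurd rfl ht

/-- construction of an exact lift of a balanced row -/
lemma rowlift {m : ℕ} (b v : Fin m → Smax Γ) (hv : ∀ l, IsSigned (v l))
    (hbal : IsBal (∑ l, b l * v l)) :
    ∃ y : Fin m → AddMonoidAlgebra ℝ Γ,
      (∀ l, LiftR (y l) (b l)) ∧ (∑ l, y l * liftW 1 (v l)) = 0 := by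
  classical
  rcases hW : (∑ l, b l * v l) with _ | ⟨μ, ω⟩
  · -- the row is identically zero against v
    rw [none_eq_zero] at hW
    refine ⟨fun l => liftW 1 (b l), fun l => LiftR_liftW one_pos _, ?_⟩
    apply Finset.sum_eq_zero
    intro l _
    have h0 : b l * v l = 0 := sum_eq_zero_all hW l (Finset.mem_univ l)
    show liftW 1 (b l) * liftW 1 (v l) = 0
    rcases mul_eq_zero_smax h0 with h | h
    · rw [h, liftW_zero, zero_mul]
    · rw [h, liftW_zero, mul_zero]
  have hω : ω = SSign.bal := by rw [hW] at hbal; exact isBal_some.1 hbal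
  subst hω
  have hsmodle : ∀ l, smod (b l * v l) ≤ (μ : WithBot Γ) := by
    intro l
    have := smod_sum_le (f := fun l => b l * v l) (Finset.mem_univ l)
    rwa [hW, smod_some] at this
  by_cases hbt : ∃ l₀, IsBal (b l₀ * v l₀) ∧ smod (b l₀ * v l₀) = (μ : WithBot Γ)
  · -- case (i): a balanced entry attains the maximum
    obtain ⟨l₀, hb0, hm0⟩ := hbt
    have hprod : b l₀ * v l₀ = some (μ, SSign.bal) := by
      rcases hp : b l₀ * v l₀ with _ | ⟨e, se⟩
      · rw [hp, smod_none] at hm0; exact absurd hm0 WithBot.bot_ne_coe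
      · rw [hp, smod_some] at hm0
        rw [hp] at hb0
        have he : e = μ := by exact_mod_cast hm0
        have hse : se = SSign.bal := isBal_some.1 hb0
        rw [he, hse]
    obtain ⟨c₀, s₀, cv₀, sv₀, hb0', hv0', hsum0, hsgn0⟩ := mul_some_decomp hprod
    have hsv : sv₀ ≠ SSign.bal := by
      have := hv l₀; rw [hv0'] at this; exact this
    obtain ⟨e₀, he₀, hxv0, -, -⟩ := liftW_one_signed hv0' hsv
    set S : AddMonoidAlgebra ℝ Γ :=
      ∑ l ∈ Finset.univ.erase l₀, liftW 1 (b l) * liftW 1 (v l) with hS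
    have hBndS : Bnd S μ := by
      apply Bnd_sum
      intro l _
      exact LiftR_of_le (LiftR_mul (LiftR_liftW one_pos _) (LiftR_liftW one_pos _))
        (hsmodle l)
    set y : Fin m → AddMonoidAlgebra ℝ Γ :=
      Function.update (fun l => liftW 1 (b l)) l₀
        (-(S * AddMonoidAlgebra.single (-cv₀) e₀)) with hy
    refine ⟨y, ?_, ?_⟩
    · intro l
      rcases eq_or_ne l l₀ with rfl | hl
      · rw [hy, Function.update_self]
        have hs₀ : s₀ = SSign.bal := sgnMul_eq_bal hsv hsgn0
        rw [hb0', hs₀]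
        show Bnd _ c₀
        apply Bnd_neg
        have hb : Bnd (S * AddMonoidAlgebra.single (-cv₀) e₀) (μ + -cv₀) :=
          Bnd_mul hBndS (Bnd_single _ _)
        have hμ : μ + -cv₀ = c₀ := by rw [← hsum0]; abel
        rwa [hμ] at hb
      · rw [hy, Function.update_of_ne hl]
        exact LiftR_liftW one_pos _
    · rw [← Finset.add_sum_erase _ _ (Finset.mem_univ l₀)]
      have h1 : ∀ l ∈ Finset.univ.erase l₀,
          y l * liftW 1 (v l) = liftW 1 (b l) * liftW 1 (v l) := by
        intro l hl
        rw [hy, Function.update_of_ne (Finset.ne_of_mem_erase hl)]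
      rw [Finset.sum_congr rfl h1, ← hS, hy, Function.update_self, hxv0, neg_mul,
        mul_assoc, AddMonoidAlgebra.single_mul_single, neg_add_cancel, he₀,
        ← AddMonoidAlgebra.one_def, mul_one, neg_add_cancel]
  · -- case (ii): two opposite signed entries attain the maximum
    obtain ⟨⟨lp, _, hp⟩, ⟨lq, _, hq⟩⟩ :=
      sum_bal_top hW (fun l _ hcon => hbt ⟨l, hcon.1, hcon.2⟩)
    have hpq : lp ≠ lq := by
      intro h
      rw [h, hq] at hp
      exact absurd (Prod.ext_iff.1 (Option.some.inj hp)).2 (by simp)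
    set ρfun : Fin m → ℝ := fun l => if l = lq then (m + 1 : ℝ) else 1 with hρ
    have hρpos : ∀ l, 0 < ρfun l := by
      intro l
      by_cases h : l = lq <;> simp [hρ, h] <;> positivity
    set y0 : Fin m → AddMonoidAlgebra ℝ Γ := fun l => liftW (ρfun l) (b l) with hy0
    set S := ∑ l ∈ Finset.univ.erase lp, y0 l * liftW 1 (v l) with hS
    have hterm : ∀ l, LiftR (y0 l * liftW 1 (v l)) (b l * v l) := by
      intro l
      exact LiftR_mul (LiftR_liftW (hρpos l) _) (LiftR_liftW one_pos _)
    have hcoefflq : (y0 lq * liftW 1 (v lq)) μ = -(m + 1 : ℝ) := by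
      rw [hy0]
      rw [coeff_term hq (by simp)]
      rw [if_neg (by simp), hρ]
      simp
    have hcoeffle : ∀ l, l ≠ lq → (y0 l * liftW 1 (v l)) μ ≤ 1 := by
      intro l hl
      rcases lt_or_eq_of_le (hsmodle l) with hlt | heq
      · rw [coeff_zero_of_smod_lt (hterm l) hlt]; norm_num
      · rcases hw : b l * v l with _ | ⟨e, τ⟩
        · rw [hw, smod_none] at heq; exact absurd heq WithBot.bot_ne_coe
        · have he : e = μ := by
            rw [hw, smod_some] at heq; exact_mod_cast heq
          subst he
          have hτ : τ ≠ SSign.bal := by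
            intro hcon
            subst hcon
            exact hbt ⟨l, by rw [hw]; exact isBal_bal e, by rw [hw, smod_some]⟩
          rw [hy0, coeff_term hw hτ]
          have hρl : ρfun l = 1 := by rw [hρ]; simp [hl]
          by_cases hτp : τ = SSign.pos
          · rw [if_pos hτp, hρl]
          · rw [if_neg hτp, hρl]; norm_num
    have hSμ : S μ < 0 := by
      have hflq : lq ∈ Finset.univ.erase lp := Finset.mem_erase.2 ⟨hpq.symm, Finset.mem_univ _⟩
      rw [hS, AddMonoidAlgebra.coeff_sum, Finsupp.finset_sum_apply, ← Finset.add_sum_erase _ _ hflq, hcoefflq]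
      have hbound : ∑ l ∈ (Finset.univ.erase lp).erase lq, (y0 l * liftW 1 (v l)) μ
          ≤ ((Finset.univ.erase lp).erase lq).card • (1 : ℝ) := by
        apply Finset.sum_le_card_nsmul
        intro l hl
        exact hcoeffle l (Finset.ne_of_mem_erase hl)
      have hcard : (((Finset.univ.erase lp).erase lq).card : ℝ) ≤ m := by
        have h1 : ((Finset.univ.erase lp).erase lq).card ≤ m := by
          simpa using Finset.card_le_univ ((Finset.univ.erase lp).erase lq)
        exact_mod_cast h1
      rw [nsmul_eq_mul, mul_one] at hbound
      linarith
    obtain ⟨cb₁, sb₁, cv₁, sv₁, hb1, hv1, hsum1, hsgn1⟩ := mul_some_decomp hp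
    have hsv1 : sv₁ ≠ SSign.bal := by
      have := hv lp; rw [hv1] at this; exact this
    have hsb1 : sb₁ ≠ SSign.bal := (sgnMul_ne_bal (by rw [hsgn1]; simp)).1
    obtain ⟨e₁, he₁, hxv1, hep, hen⟩ := liftW_one_signed hv1 hsv1
    have hBndS : Bnd S μ := by
      apply Bnd_sum
      intro l _
      exact LiftR_of_le (hterm l) (hsmodle l)
    set y : Fin m → AddMonoidAlgebra ℝ Γ :=
      Function.update y0 lp (-(S * AddMonoidAlgebra.single (-cv₁) e₁)) with hy
    have hcoeffpivot : (-(S * AddMonoidAlgebra.single (-cv₁) e₁)) cb₁ = -(S μ * e₁) := by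
      rw [AddMonoidAlgebra.coeff_neg, Finsupp.neg_apply, AddMonoidAlgebra.coeff_mul_single_apply]
      have : cb₁ + - -cv₁ = μ := by rw [← hsum1]; abel
      rw [this]
    refine ⟨y, ?_, ?_⟩
    · intro l
      rcases eq_or_ne l lp with rfl | hl
      · rw [hy, Function.update_self, hb1]
        have hBnd1 : Bnd (-(S * AddMonoidAlgebra.single (-cv₁) e₁)) cb₁ := by
          apply Bnd_neg
          have hb : Bnd (S * AddMonoidAlgebra.single (-cv₁) e₁) (μ + -cv₁) :=
            Bnd_mul hBndS (Bnd_single _ _)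
          have hμ : μ + -cv₁ = cb₁ := by rw [← hsum1]; abel
          rwa [hμ] at hb
        cases sv₁ with
        | bal => exact absurd rfl hsv1
        | pos =>
          have hsb : sb₁ = SSign.pos := by
            cases sb₁ <;> simp_all [sgnMul]
          subst hsb
          have he : e₁ = 1 := hep rfl
          refine ⟨hBnd1, ?_⟩
          rw [hcoeffpivot, he, mul_one]
          linarith
        | neg =>
          have hsb : sb₁ = SSign.neg := by
            cases sb₁ <;> simp_all [sgnMul]
          subst hsb
          have he : e₁ = -1 := hen rfl
          refine ⟨hBnd1, ?_⟩
          rw [hcoeffpivot, he]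
          have : -(S μ * (-1)) = S μ := by ring
          rw [this]
          exact hSμ
      · rw [hy, Function.update_of_ne hl]
        exact LiftR_liftW (hρpos l) _
    · rw [← Finset.add_sum_erase _ _ (Finset.mem_univ lp)]
      have h1 : ∀ l ∈ Finset.univ.erase lp,
          y l * liftW 1 (v l) = y0 l * liftW 1 (v l) := by
        intro l hl
        rw [hy, Function.update_of_ne (Finset.ne_of_mem_erase hl)]
      rw [Finset.sum_congr rfl h1, ← hS, hy, Function.update_self, hxv1, neg_mul,
        mul_assoc, AddMonoidAlgebra.single_mul_single, neg_add_cancel, he₁,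
        ← AddMonoidAlgebra.one_def, mul_one, neg_add_cancel]

end RowLift

section KernelDet
variable {Γ : Type} [AddCommGroup Γ] [LinearOrder Γ] [IsOrderedAddMonoid Γ]

lemma LiftR_sign {m : ℕ} (σ : Equiv.Perm (Fin m)) :
    LiftR (((Equiv.Perm.sign σ : ℤ) : AddMonoidAlgebra ℝ Γ)) (permSignS σ) := by
  unfold permSignS
  rcases Int.units_eq_one_or (Equiv.Perm.sign σ) with h | h <;> rw [h]
  · rw [if_pos (show ((1 : ℤˣ) : ℤ) = 1 from rfl)]
    simpa using (LiftR_one : LiftR (1 : AddMonoidAlgebra ℝ Γ) (1 : Smax Γ))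
  · rw [if_neg (show ¬((-1 : ℤˣ) : ℤ) = 1 by decide)]
    have hc : (((-1 : ℤˣ) : ℤ) : AddMonoidAlgebra ℝ Γ) = -1 := by push_cast; ring
    rw [hc]
    exact LiftR_neg LiftR_one

/-- a matrix with a signed nonzero balanced-kernel vector has balanced determinant -/
theorem detS_isBal_of_kernel {m : ℕ} (N : Matrix (Fin m) (Fin m) (Smax Γ))
    (v : Fin m → Smax Γ) (hv : ∀ l, IsSigned (v l)) (lh : Fin m) (hvne : v lh ≠ 0)
    (hker : ∀ r, IsBal (∑ l, N r l * v l)) : IsBal (detS N) := by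
  classical
  rcases hdet : detS N with _ | ⟨t, ε⟩
  · exact trivial
  by_cases hbal : ε = SSign.bal
  · rw [hbal]; exact isBal_bal t
  exfalso
  have hrow : ∀ r, ∃ y : Fin m → AddMonoidAlgebra ℝ Γ,
      (∀ l, LiftR (y l) (N r l)) ∧ (∑ l, y l * liftW 1 (v l)) = 0 :=
    fun r => rowlift (N r) v hv (hker r)
  choose Y hY1 hY2 using hrow
  set xv : Fin m → AddMonoidAlgebra ℝ Γ := fun l => liftW 1 (v l) with hxv
  set NR : Matrix (Fin m) (Fin m) (AddMonoidAlgebra ℝ Γ) := Matrix.of (fun r l => Y r l)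
    with hNR
  have hterm : ∀ σ : Equiv.Perm (Fin m),
      LiftR ((((Equiv.Perm.sign σ : ℤ)) : AddMonoidAlgebra ℝ Γ) * ∏ i, NR i (σ i))
        (permSignS σ * ∏ i, N i (σ i)) :=
    fun σ => LiftR_mul (LiftR_sign σ) (LiftR_prod fun i _ => hY1 i (σ i))
  have hdet' := hdet
  rw [detS_eq_sum] at hdet'
  have hdc : ∀ σ : Equiv.Perm (Fin m), (permSignS σ * ∏ i, N i (σ i) : Smax Γ) = some (t, ε)
      ∨ smod (permSignS σ * ∏ i, N i (σ i)) < (t : WithBot Γ) :=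
    fun σ => sum_signed_cases hbal hdet' σ (Finset.mem_univ σ)
  have hattain : ∃ σ₀ : Equiv.Perm (Fin m),
      (permSignS σ₀ * ∏ i, N i (σ₀ i) : Smax Γ) = some (t, ε) := by
    obtain ⟨σ₀, -, h⟩ := sum_attain (f := fun σ => permSignS σ * ∏ i, N i (σ i))
      (by rw [hdet', smod_some])
    rcases hdc σ₀ with h1 | h1
    · exact ⟨σ₀, h1⟩
    · exact absurd h (ne_of_lt h1)
  have hdetR : NR.det = ∑ σ : Equiv.Perm (Fin m),
      (((Equiv.Perm.sign σ : ℤ)) : AddMonoidAlgebra ℝ Γ) * ∏ i, NR i (σ i) := by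
    rw [← Matrix.det_transpose, Matrix.det_apply']
    exact Finset.sum_congr rfl fun σ _ => rfl
  have hcoeffs : ∀ σ : Equiv.Perm (Fin m),
      ((((Equiv.Perm.sign σ : ℤ)) : AddMonoidAlgebra ℝ Γ) * ∏ i, NR i (σ i)) t = 0
      ∨ ((permSignS σ * ∏ i, N i (σ i) : Smax Γ) = some (t, ε) ∧
        (ε = SSign.pos → 0 < ((((Equiv.Perm.sign σ : ℤ)) : AddMonoidAlgebra ℝ Γ)
            * ∏ i, NR i (σ i)) t) ∧
        (ε = SSign.neg → ((((Equiv.Perm.sign σ : ℤ)) : AddMonoidAlgebra ℝ Γ)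
            * ∏ i, NR i (σ i)) t < 0)) := by
    intro σ
    rcases hdc σ with h1 | h1
    · right
      refine ⟨h1, ?_, ?_⟩
      · intro hε
        have := hterm σ
        rw [h1, hε] at this
        exact this.2
      · intro hε
        have := hterm σ
        rw [h1, hε] at this
        exact this.2
    · left
      exact coeff_zero_of_smod_lt (hterm σ) h1
  have hcoeff : NR.det t ≠ 0 := by
    rw [hdetR, AddMonoidAlgebra.coeff_sum, Finsupp.finset_sum_apply]
    cases ε with
    | bal => exact absurd rfl hbal
    | pos =>
      have hpos : 0 < ∑ σ : Equiv.Perm (Fin m),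
          ((((Equiv.Perm.sign σ : ℤ)) : AddMonoidAlgebra ℝ Γ) * ∏ i, NR i (σ i)) t := by
        apply Finset.sum_pos'
        · intro σ _
          show 0 ≤ ((((Equiv.Perm.sign σ : ℤ)) : AddMonoidAlgebra ℝ Γ) * ∏ i, NR i (σ i)) t
          rcases hcoeffs σ with h | h
          · rw [h]
          · exact le_of_lt (h.2.1 rfl)
        · obtain ⟨σ₀, h0⟩ := hattain
          refine ⟨σ₀, Finset.mem_univ _, ?_⟩
          show 0 < ((((Equiv.Perm.sign σ₀ : ℤ)) : AddMonoidAlgebra ℝ Γ) * ∏ i, NR i (σ₀ i)) t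
          rcases hcoeffs σ₀ with h | h
          · have := hterm σ₀
            rw [h0] at this
            have h2 := this.2
            rw [h] at h2
            exact absurd h2 (lt_irrefl 0)
          · exact h.2.1 rfl
      exact ne_of_gt hpos
    | neg =>
      have hneg : 0 < ∑ σ : Equiv.Perm (Fin m),
          -(((((Equiv.Perm.sign σ : ℤ)) : AddMonoidAlgebra ℝ Γ) * ∏ i, NR i (σ i)) t) := by
        apply Finset.sum_pos'
        · intro σ _
          show 0 ≤ -(((((Equiv.Perm.sign σ : ℤ)) : AddMonoidAlgebra ℝ Γ) * ∏ i, NR i (σ i)) t)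
          rcases hcoeffs σ with h | h
          · rw [h]; simp
          · simpa using le_of_lt (h.2.2 rfl)
        · obtain ⟨σ₀, h0⟩ := hattain
          refine ⟨σ₀, Finset.mem_univ _, ?_⟩
          show 0 < -(((((Equiv.Perm.sign σ₀ : ℤ)) : AddMonoidAlgebra ℝ Γ) * ∏ i, NR i (σ₀ i)) t)
          rcases hcoeffs σ₀ with h | h
          · have := hterm σ₀
            rw [h0] at this
            have h2 := this.2
            rw [h] at h2
            exact absurd h2 (lt_irrefl 0)
          · simpa using h.2.2 rfl
      rw [Finset.sum_neg_distrib] at hneg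
      intro hc
      rw [hc] at hneg
      simp at hneg
  have hmulvec : NR.mulVec xv = 0 := by
    funext r
    show (∑ l, NR r l * xv l) = 0
    exact hY2 r
  have h1 : (Matrix.adjugate NR).mulVec (NR.mulVec xv) = NR.det • xv := by
    rw [Matrix.mulVec_mulVec, Matrix.adjugate_mul, Matrix.smul_mulVec,
      Matrix.one_mulVec]
  rw [hmulvec, Matrix.mulVec_zero] at h1
  have h2 : NR.det * xv lh = 0 := by
    have h3 := congrFun h1 lh
    simp only [Pi.zero_apply, Pi.smul_apply, smul_eq_mul] at h3
    exact h3.symm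
  obtain ⟨d, tt, hvl⟩ : ∃ d tt, v lh = some (d, tt) := by
    rcases hvv : v lh with _ | ⟨d, tt⟩
    · exact absurd hvv hvne
    · exact ⟨d, tt, rfl⟩
  have htt : tt ≠ SSign.bal := by
    have := hv lh; rw [hvl] at this; exact this
  obtain ⟨e, he, hxvl, -, -⟩ := liftW_one_signed hvl htt
  have h4 : NR.det * (AddMonoidAlgebra.single d e * AddMonoidAlgebra.single (-d) e) = 0 := by
    rw [← mul_assoc, ← hxvl]
    rw [show liftW 1 (v lh) = xv lh from rfl, h2, zero_mul]
  rw [AddMonoidAlgebra.single_mul_single, add_neg_cancel, he,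
    ← AddMonoidAlgebra.one_def, mul_one] at h4
  exact hcoeff (by rw [h4]; rfl)

end KernelDet

section Assembly
variable {Γ : Type} [AddCommGroup Γ] [LinearOrder Γ] [IsOrderedAddMonoid Γ]

lemma matVecS_eq {n : ℕ} (A : Matrix (Fin n) (Fin n) (Smax Γ)) (x : Fin n → Smax Γ)
    (i : Fin n) : matVecS A x i = ∑ l, A i l * x l := by
  rw [matVecS, sumS_finRange]
  rfl

lemma ssub_eq (a b : Smax Γ) : ssub a b = a + sneg b := rfl

lemma balance_def (a b : Smax Γ) : Balance a b ↔ IsBal (a + sneg b) := Iff.rfl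

lemma charMatS_apply {n : ℕ} (γ : Smax Γ) (A : Matrix (Fin n) (Fin n) (Smax Γ)) (i l : Fin n) :
    charMatS γ A i l = γ * idMatS i l + sneg (A i l) := rfl

lemma idMatS_self {n : ℕ} (i : Fin n) : (idMatS : Matrix (Fin n) (Fin n) (Smax Γ)) i i = 1 := by
  rw [idMatS]
  show (if i = i then sone else szero) = 1
  rw [if_pos rfl, one_def]

lemma idMatS_ne {n : ℕ} {i l : Fin n} (h : i ≠ l) :
    (idMatS : Matrix (Fin n) (Fin n) (Smax Γ)) i l = 0 := by
  rw [idMatS]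
  show (if i = l then sone else szero) = 0
  rw [if_neg h, zero_def]

lemma charMat_mulvec {n : ℕ} (γ : Smax Γ) (A : Matrix (Fin n) (Fin n) (Smax Γ))
    (x : Fin n → Smax Γ) (i : Fin n) :
    ∑ l, charMatS γ A i l * x l = γ * x i + sneg (∑ l, A i l * x l) := by
  classical
  have hterm : ∀ l, charMatS γ A i l * x l
      = (γ * idMatS i l) * x l + sneg (A i l * x l) := by
    intro l
    rw [charMatS_apply, add_mul, sneg_mul]
  rw [Finset.sum_congr rfl fun l _ => hterm l, Finset.sum_add_distrib]
  congr 1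
  · rw [Finset.sum_eq_single i]
    · rw [idMatS_self, mul_one]
    · intro l _ hl
      rw [idMatS_ne (Ne.symm hl), mul_zero, zero_mul]
    · intro h; exact absurd (Finset.mem_univ i) h
  · exact (map_sum snegHom (fun l => A i l * x l) Finset.univ).symm

lemma balance_iff_charMat {n : ℕ} (γ : Smax Γ) (A : Matrix (Fin n) (Fin n) (Smax Γ))
    (x : Fin n → Smax Γ) (i : Fin n) :
    Balance (matVecS A x i) (smul γ (x i)) ↔ IsBal (∑ l, charMatS γ A i l * x l) := by
  rw [balance_def, ← times_eq_smul, charMat_mulvec, matVecS_eq]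
  have h : γ * x i + sneg (∑ l, A i l * x l)
      = sneg ((∑ l, A i l * x l) + sneg (γ * x i)) := by
    rw [sneg_add, sneg_sneg, add_comm]
  rw [h, isBal_sneg]

lemma minorS_updateRow {n : ℕ} (M : Matrix (Fin (n+1)) (Fin (n+1)) (Smax Γ))
    (j l : Fin (n+1)) (u : Fin (n+1) → Smax Γ) :
    minorS (M.updateRow j u) j l = minorS M j l := by
  funext a b
  show M.updateRow j u (j.succAbove a) (l.succAbove b) = M (j.succAbove a) (l.succAbove b)
  rw [Matrix.updateRow_ne (Fin.succAbove_ne j a)]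

lemma detS_updateRow {n : ℕ} (M : Matrix (Fin (n+1)) (Fin (n+1)) (Smax Γ))
    (j : Fin (n+1)) (u : Fin (n+1) → Smax Γ) :
    detS (M.updateRow j u) = ∑ l, u l * adjS M l j := by
  rw [detS_laplace_adj (M.updateRow j u) j]
  refine Finset.sum_congr rfl fun l _ => ?_
  rw [adjS_eq, adjS_eq, minorS_updateRow]
  congr 1
  show M.updateRow j u j l = u l
  rw [Matrix.updateRow_self]

lemma sinv_mul_self {a : Smax Γ} (ha : IsSigned a) (h0 : a ≠ 0) : sinv a * a = 1 := by
  rcases a with _ | ⟨c, s⟩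
  · exact absurd rfl h0
  rw [isSigned_some] at ha
  cases s with
  | bal => exact absurd rfl ha
  | pos =>
    rw [show sinv (some (c, SSign.pos) : Smax Γ) = some (-c, SSign.pos) from rfl,
      times_eq_smul, smul_some_some, neg_add_cancel]
    rfl
  | neg =>
    rw [show sinv (some (c, SSign.neg) : Smax Γ) = some (-c, SSign.neg) from rfl,
      times_eq_smul, smul_some_some, neg_add_cancel]
    rfl

lemma isSigned_sinv {a : Smax Γ} (ha : IsSigned a) : IsSigned (sinv a) := by
  rcases a with _ | ⟨c, s⟩
  · exact trivial
  · exact ha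

lemma sinv_ne_zero {a : Smax Γ} (h0 : a ≠ 0) : sinv a ≠ 0 := by
  rcases a with _ | ⟨c, s⟩
  · exact absurd rfl h0
  · exact Option.some_ne_none _

end Assembly

/-- if γ is an 𝕊max-eigenvalue of A, B = γ⊙I ⊖ A, and the j-th
column of B^adj is signed and nonzero, then this column is an
𝕊max-eigenvector of A for γ and every 𝕊max-eigenvector for γ is a signed
nonzero multiple of it. -/
theorem adjugate_column_is_unique_eigenvector {Γ : Type}
    [AddCommGroup Γ] [LinearOrder Γ] [IsOrderedAddMonoid Γ] [Nontrivial Γ] (hdiv : DivisibleGrp Γ) {n : ℕ}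
    (A : Matrix (Fin (n+1)) (Fin (n+1)) (Smax Γ)) (γ : Smax Γ) (hγ : IsSigned γ)
    (heig : IsBal (detS (charMatS γ A)))
    (j : Fin (n+1))
    (hcolsgn : ∀ l, IsSigned (adjS (charMatS γ A) l j))
    (hcolne : (fun l => adjS (charMatS γ A) l j) ≠ zeroVecS) :
    (∀ i, Balance (matVecS A (fun l => adjS (charMatS γ A) l j) i)
        (smul γ (adjS (charMatS γ A) i j))) ∧
    (∀ v : Fin (n+1) → Smax Γ, VecSigned v → v ≠ zeroVecS →
      (∀ i, Balance (matVecS A v i) (smul γ (v i))) →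
      ∃ lam : Smax Γ, IsSigned lam ∧ lam ≠ szero ∧
        v = fun l => smul lam (adjS (charMatS γ A) l j)) := by
  classical
  set B := charMatS γ A with hB
  have part1 : ∀ i, Balance (matVecS A (fun l => adjS B l j) i) (smul γ (adjS B i j)) := by
    intro i
    rw [balance_iff_charMat]
    rcases eq_or_ne i j with rfl | hij
    · rw [← hB, ← detS_laplace_adj B i]
      exact heig
    · rw [← hB]
      have hsum : (∑ l, B i l * adjS B l j) = detS (B.updateRow j (B i)) := by
        rw [detS_updateRow]
      rw [hsum]
      apply detS_isBal_of_rows_eq _ i j hij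
      rw [Matrix.updateRow_ne hij, Matrix.updateRow_self]
  refine ⟨part1, ?_⟩
  intro v hv hvne heigv
  obtain ⟨lh, hlh⟩ : ∃ l, v l ≠ 0 := by
    by_contra hc
    push_neg at hc
    exact hvne (funext fun l => hc l)
  have hker : ∀ r, IsBal (∑ l, B r l * v l) := fun r =>
    (balance_iff_charMat γ A v r).1 (heigv r)
  have KL : ∀ i k, v i * adjS B k j = v k * adjS B i j := by
    intro i k
    rcases eq_or_ne i k with rfl | hik
    · rfl
    set u : Fin (n+1) → Smax Γ :=
      fun l => if l = k then v i else if l = i then sneg (v k) else 0 with hu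
    have hu_k : u k = v i := by rw [hu]; simp
    have hu_i : u i = sneg (v k) := by rw [hu]; simp [hik]
    have hu_other : ∀ l, l ≠ k → l ≠ i → u l = 0 := by
      intro l h1 h2
      rw [hu]
      show (if l = k then v i else if l = i then sneg (v k) else 0) = 0
      rw [if_neg h1, if_neg h2]
    have two_point : ∀ w : Fin (n+1) → Smax Γ,
        (∑ l, u l * w l) = v i * w k + sneg (v k) * w i := by
      intro w
      have hk : k ∈ (Finset.univ : Finset (Fin (n+1))) := Finset.mem_univ k
      rw [← Finset.add_sum_erase _ _ hk]
      have hik' : i ∈ Finset.univ.erase k := Finset.mem_erase.2 ⟨hik, Finset.mem_univ i⟩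
      rw [← Finset.add_sum_erase _ _ hik']
      have hz : (∑ l ∈ (Finset.univ.erase k).erase i, u l * w l) = 0 := by
        apply Finset.sum_eq_zero
        intro l hl
        rw [hu_other l (Finset.ne_of_mem_erase (Finset.mem_of_mem_erase hl))
          (Finset.ne_of_mem_erase hl), zero_mul]
      rw [hz, add_zero, hu_k, hu_i]
    have hkerM' : ∀ r, IsBal (∑ l, (B.updateRow j u) r l * v l) := by
      intro r
      rcases eq_or_ne r j with hrj | hr
      · subst hrj
        have hvals : ∀ l, (B.updateRow r u) r l * v l = u l * v l := by
          intro l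
          rw [Matrix.updateRow_self]
        rw [Finset.sum_congr rfl fun l _ => hvals l, two_point v]
        have : sneg (v k) * v i = sneg (v i * v k) := by
          rw [← sneg_mul, mul_comm]
        rw [this]
        exact add_sneg_self _
      · have hrow : (B.updateRow j u) r = B r := Matrix.updateRow_ne hr
        rw [Finset.sum_congr rfl fun l _ => by rw [hrow]]
        exact hker r
    have hbalM' := detS_isBal_of_kernel (B.updateRow j u) v hv lh hlh hkerM'
    have hdetM' : detS (B.updateRow j u) = v i * adjS B k j + sneg (v k) * adjS B i j := by
      rw [detS_updateRow]
      exact two_point (fun l => adjS B l j)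
    rw [hdetM'] at hbalM'
    apply signed_eq_of_bal (isSigned_mul (hv i) (hcolsgn k)) (isSigned_mul (hv k) (hcolsgn i))
    rw [← sneg_mul] at hbalM'
    exact hbalM'
  obtain ⟨k₁, hk₁⟩ : ∃ k, adjS B k j ≠ 0 := by
    by_contra hc
    push_neg at hc
    exact hcolne (funext fun l => hc l)
  have hvk : v k₁ ≠ 0 := by
    intro h0
    have hklh := KL lh k₁
    rw [h0, zero_mul] at hklh
    exact (mul_ne_zero' hlh hk₁) hklh
  refine ⟨v k₁ * sinv (adjS B k₁ j), isSigned_mul (hv k₁) (isSigned_sinv (hcolsgn k₁)),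
    mul_ne_zero' hvk (sinv_ne_zero hk₁), ?_⟩
  funext l
  show v l = (v k₁ * sinv (adjS B k₁ j)) * adjS B l j
  calc v l = v l * 1 := (mul_one _).symm
    _ = v l * (sinv (adjS B k₁ j) * adjS B k₁ j) := by
        rw [sinv_mul_self (hcolsgn k₁) hk₁]
    _ = sinv (adjS B k₁ j) * (v l * adjS B k₁ j) := by ring
    _ = sinv (adjS B k₁ j) * (v k₁ * adjS B l j) := by rw [← KL k₁ l]
    _ = (v k₁ * sinv (adjS B k₁ j)) * adjS B l j := by ring


end TropPaper
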